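/- arXiv:2103.09594 — 6 statements merged into one kernel-verified Lean document; each statement's English description precedes it below -/
import Mathlib

section
/- Let (a_n)_{n≥1} be a sequence of complex numbers and (X_n)_{n≥1} a sequence of complex-valued random variables with E(|X_n|^2) = 1 for all n. For any integer N > 0, let S_N* = max_{1 ≤ j ≤ N} |Σ_{n=1}^j a_n X_n|. Then E( (S_N*)² ) ≤ (2 + log₂ N)² · Σ_{n,m=1}^N |a_n| |a_m| |E(X_n · conj(X_m))|. -/
open MeasureTheory Filter
open scoped ENNReal NNReal

private lemma mr_memLp {Ω : Type*} [MeasurableSpace Ω] (P : Measure Ω) [IsProbabilityMeasure P]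
    (f : Ω → ℂ) (hmeas : AEMeasurable f P) (hnorm : ∫ ω, ‖f ω‖ ^ 2 ∂P = 1) :
    MemLp f 2 P := by
  have hsm : AEStronglyMeasurable f P := hmeas.aestronglyMeasurable
  refine (memLp_two_iff_integrable_sq_norm hsm).2 ?_
  by_contra h
  rw [integral_undef h] at hnorm
  norm_num at hnorm

private lemma mr_block_bound {Ω : Type*} [MeasurableSpace Ω] (P : Measure Ω)
    [IsProbabilityMeasure P] (a : ℕ → ℂ) (X : ℕ → Ω → ℂ)
    (s : Finset ℕ) (hL2 : ∀ n ∈ s, MemLp (X n) 2 P) :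
    ∫ ω, ‖∑ n ∈ s, a n * X n ω‖ ^ 2 ∂P ≤
      ∑ n ∈ s, ∑ m ∈ s, ‖a n‖ * ‖a m‖ * ‖∫ ω, X n ω * (starRingEnd ℂ) (X m ω) ∂P‖ := by
  classical
  have hprod : ∀ n ∈ s, ∀ m ∈ s, Integrable (fun ω => X n ω * (starRingEnd ℂ) (X m ω)) P := by
    intro n hn m hm
    have hgc : MemLp (fun ω => (starRingEnd ℂ) (X m ω)) 2 P := by
      refine MemLp.of_le (hL2 m hm) ?_ (Filter.Eventually.of_forall fun ω => ?_)
      · exact Complex.continuous_conj.comp_aestronglyMeasurable (hL2 m hm).1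
      · simp
    have h : MemLp ((X n) • fun ω => (starRingEnd ℂ) (X m ω)) 1 P :=
      hgc.smul (hL2 n hn)
    rw [← memLp_one_iff_integrable]
    exact h
  have hbigInt : ∀ n ∈ s, ∀ m ∈ s,
      Integrable (fun ω => (a n * (starRingEnd ℂ) (a m)) * (X n ω * (starRingEnd ℂ) (X m ω))) P :=
    fun n hn m hm => (hprod n hn m hm).const_mul _
  have hpt : ∀ ω, (‖∑ n ∈ s, a n * X n ω‖ ^ 2 : ℝ) =
      (∑ n ∈ s, ∑ m ∈ s,
        (a n * (starRingEnd ℂ) (a m)) * (X n ω * (starRingEnd ℂ) (X m ω))).re := by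
    intro ω
    have h1 : (∑ n ∈ s, ∑ m ∈ s,
        (a n * (starRingEnd ℂ) (a m)) * (X n ω * (starRingEnd ℂ) (X m ω))) =
        (∑ n ∈ s, a n * X n ω) * (starRingEnd ℂ) (∑ m ∈ s, a m * X m ω) := by
      rw [map_sum, Finset.sum_mul_sum]
      refine Finset.sum_congr rfl fun n _ => Finset.sum_congr rfl fun m _ => ?_
      simp only [map_mul]
      ring
    rw [h1, Complex.mul_conj, Complex.ofReal_re, Complex.normSq_eq_norm_sq]
  calc ∫ ω, ‖∑ n ∈ s, a n * X n ω‖ ^ 2 ∂P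
      = ∫ ω, (∑ n ∈ s, ∑ m ∈ s,
          (a n * (starRingEnd ℂ) (a m)) * (X n ω * (starRingEnd ℂ) (X m ω))).re ∂P := by
        exact integral_congr_ae (Filter.Eventually.of_forall fun ω => hpt ω)
    _ = (∫ ω, ∑ n ∈ s, ∑ m ∈ s,
          (a n * (starRingEnd ℂ) (a m)) * (X n ω * (starRingEnd ℂ) (X m ω)) ∂P).re := by
        have hInt : Integrable (fun ω => ∑ n ∈ s, ∑ m ∈ s,
            (a n * (starRingEnd ℂ) (a m)) * (X n ω * (starRingEnd ℂ) (X m ω))) P :=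
          integrable_finset_sum _ fun n hn =>
            integrable_finset_sum _ fun m hm => hbigInt n hn m hm
        exact integral_re hInt
    _ = (∑ n ∈ s, ∑ m ∈ s,
          (a n * (starRingEnd ℂ) (a m)) * ∫ ω, X n ω * (starRingEnd ℂ) (X m ω) ∂P).re := by
        rw [integral_finset_sum _ fun n hn =>
          integrable_finset_sum _ fun m hm => hbigInt n hn m hm]
        congr 1
        refine Finset.sum_congr rfl fun n hn => ?_
        rw [integral_finset_sum _ fun m hm => hbigInt n hn m hm]
        exact Finset.sum_congr rfl fun m hm => integral_const_mul _ _
    _ ≤ ∑ n ∈ s, ∑ m ∈ s, ‖a n‖ * ‖a m‖ * ‖∫ ω, X n ω * (starRingEnd ℂ) (X m ω) ∂P‖ := by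
        rw [Complex.re_sum]
        refine Finset.sum_le_sum fun n _ => ?_
        rw [Complex.re_sum]
        refine Finset.sum_le_sum fun m _ => ?_
        refine le_trans (Complex.re_le_norm _) ?_
        rw [norm_mul, norm_mul, Complex.norm_conj]

private lemma mr_pointwise (b : ℕ → ℂ) (N : ℕ) (hN : 0 < N) (j : ℕ) (hj1 : 1 ≤ j)
    (hjN : j ≤ N) :
    ‖∑ n ∈ Finset.Ioc 0 j, b n‖ ^ 2 ≤
      ((Nat.log 2 N + 1 : ℕ) : ℝ) * ∑ k ∈ Finset.range (Nat.log 2 N + 1),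
        ∑ q ∈ Finset.range N,
          ‖∑ n ∈ Finset.Ioc (2^(k+1)*q) (min (2^(k+1)*q + 2^k) N), b n‖ ^ 2 := by
  classical
  set L := Nat.log 2 N + 1 with hL
  have hNL : N < 2 ^ L := Nat.lt_pow_succ_log_self (by norm_num) N
  set g : ℕ → ℂ := fun k => ∑ n ∈ Finset.Ioc 0 (2 ^ k * (j / 2 ^ k)), b n with hg
  have hg0 : g 0 = ∑ n ∈ Finset.Ioc 0 j, b n := by simp [hg]
  have hgL : g L = 0 := by
    have : j / 2 ^ L = 0 := Nat.div_eq_of_lt (lt_of_le_of_lt hjN hNL)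
    simp [hg, this]
  have htele : ∑ k ∈ Finset.range L, (g k - g (k + 1)) = ∑ n ∈ Finset.Ioc 0 j, b n := by
    rw [Finset.sum_range_sub' g L, hg0, hgL, sub_zero]
  have hcs : ‖∑ n ∈ Finset.Ioc 0 j, b n‖ ^ 2 ≤
      (L : ℝ) * ∑ k ∈ Finset.range L, ‖g k - g (k + 1)‖ ^ 2 := by
    rw [← htele]
    calc ‖∑ k ∈ Finset.range L, (g k - g (k + 1))‖ ^ 2
        ≤ (∑ k ∈ Finset.range L, ‖g k - g (k + 1)‖) ^ 2 := by
          have := norm_sum_le (Finset.range L) (fun k => g k - g (k + 1))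
          exact pow_le_pow_left₀ (norm_nonneg _) this 2
      _ ≤ ((Finset.range L).card : ℝ) * ∑ k ∈ Finset.range L, ‖g k - g (k + 1)‖ ^ 2 :=
          sq_sum_le_card_mul_sum_sq
      _ = (L : ℝ) * ∑ k ∈ Finset.range L, ‖g k - g (k + 1)‖ ^ 2 := by
          rw [Finset.card_range]
  refine hcs.trans ?_
  refine mul_le_mul_of_nonneg_left (Finset.sum_le_sum fun k _ => ?_) (by positivity)
  set q₀ := j / 2 ^ (k + 1) with hq₀
  set u := j / 2 ^ k with hu
  have hq0u : q₀ = u / 2 := by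
    rw [hq₀, hu, pow_succ, ← Nat.div_div_eq_div_mul]
  have hq0N : q₀ < N :=
    lt_of_lt_of_le (Nat.div_lt_self hj1 (Nat.one_lt_two_pow_iff.mpr (by omega))) hjN
  have hle1 : 2 ^ (k + 1) * q₀ ≤ 2 ^ k * u := by
    calc 2 ^ (k + 1) * q₀ = 2 ^ k * (2 * (u / 2)) := by rw [hq0u, pow_succ]; ring
      _ ≤ 2 ^ k * u := Nat.mul_le_mul_left _ (Nat.mul_div_le u 2)
  have hdiff : g k - g (k + 1) = ∑ n ∈ Finset.Ioc (2 ^ (k+1) * q₀) (2 ^ k * u), b n := by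
    have hcons := Finset.sum_Ioc_consecutive b (Nat.zero_le (2 ^ (k+1) * q₀)) hle1
    rw [hg]
    simp only [← hq₀, ← hu]
    rw [← hcons]
    ring
  rcases Nat.even_or_odd u with he | ho
  · have : 2 ^ k * u = 2 ^ (k + 1) * q₀ := by
      obtain ⟨t, ht⟩ := he
      rw [hq0u, ht]
      have h2t : t + t = 2 * t := by ring
      rw [h2t, Nat.mul_div_cancel_left t (by norm_num), pow_succ]
      ring
    rw [hdiff, this]
    simp only [Finset.Ioc_self, Finset.sum_empty, norm_zero, ne_eq, OfNat.ofNat_ne_zero,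
      not_false_eq_true, zero_pow]
    exact Finset.sum_nonneg fun q _ => by positivity
  · obtain ⟨t, ht⟩ := ho
    have hq0t : q₀ = t := by rw [hq0u, ht]; omega
    have hub : 2 ^ k * u = 2 ^ (k + 1) * q₀ + 2 ^ k := by
      rw [hq0t, ht, pow_succ]; ring
    have hmin : min (2 ^ (k+1) * q₀ + 2 ^ k) N = 2 ^ k * u := by
      rw [← hub]
      refine min_eq_left ?_
      calc 2 ^ k * u ≤ j := by rw [hu, mul_comm]; exact Nat.div_mul_le_self j (2 ^ k)
        _ ≤ N := hjN
    have heq : ‖g k - g (k + 1)‖ ^ 2 =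
        ‖∑ n ∈ Finset.Ioc (2^(k+1)*q₀) (min (2^(k+1)*q₀ + 2^k) N), b n‖ ^ 2 := by
      rw [hdiff, hmin]
    rw [heq]
    exact Finset.single_le_sum (f := fun q =>
      ‖∑ n ∈ Finset.Ioc (2^(k+1)*q) (min (2^(k+1)*q + 2^k) N), b n‖ ^ 2)
      (fun q _ => by positivity) (Finset.mem_range.mpr hq0N)

private lemma mr_blocks_disjoint (k N : ℕ) {q q' : ℕ} (h : q ≠ q') :
    Disjoint (Finset.Ioc (2^(k+1)*q) (min (2^(k+1)*q + 2^k) N))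
      (Finset.Ioc (2^(k+1)*q') (min (2^(k+1)*q' + 2^k) N)) := by
  rw [Finset.disjoint_left]
  intro n hn hn'
  rw [Finset.mem_Ioc] at hn hn'
  have h2k : 0 < 2 ^ k := pow_pos (by norm_num) k
  have e : 2 ^ (k+1) = 2 ^ k + 2 ^ k := by rw [pow_succ]; ring
  rcases Nat.lt_or_ge q q' with hlt | hge
  · have : 2 ^ (k+1) * (q+1) ≤ 2 ^ (k+1) * q' := Nat.mul_le_mul_left _ hlt
    have h1 := hn.2.trans (min_le_left _ _)
    nlinarith [hn'.1, hn.1]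
  · have hlt' : q' < q := lt_of_le_of_ne hge (Ne.symm h)
    have : 2 ^ (k+1) * (q'+1) ≤ 2 ^ (k+1) * q := Nat.mul_le_mul_left _ hlt'
    have h1 := hn'.2.trans (min_le_left _ _)
    nlinarith [hn.1, hn'.1]

private lemma mr_sum_pairs_le (N : ℕ) (w : ℕ → ℕ → ℝ) (hw : ∀ n m, 0 ≤ w n m)
    (I : ℕ → Finset ℕ) (M : ℕ)
    (hsub : ∀ q, I q ⊆ Finset.Icc 1 N)
    (hdisj : ∀ q q', q ≠ q' → Disjoint (I q) (I q')) :
    ∑ q ∈ Finset.range M, ∑ n ∈ I q, ∑ m ∈ I q, w n m ≤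
      ∑ n ∈ Finset.Icc 1 N, ∑ m ∈ Finset.Icc 1 N, w n m := by
  classical
  calc ∑ q ∈ Finset.range M, ∑ n ∈ I q, ∑ m ∈ I q, w n m
      ≤ ∑ q ∈ Finset.range M, ∑ n ∈ I q, ∑ m ∈ Finset.Icc 1 N, w n m := by
        refine Finset.sum_le_sum fun q _ => Finset.sum_le_sum fun n _ => ?_
        exact Finset.sum_le_sum_of_subset_of_nonneg (hsub q) (fun m _ _ => hw n m)
    _ = ∑ n ∈ (Finset.range M).biUnion I, ∑ m ∈ Finset.Icc 1 N, w n m := by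
        rw [Finset.sum_biUnion]
        intro q _ q' _ hqq'
        exact hdisj q q' hqq'
    _ ≤ ∑ n ∈ Finset.Icc 1 N, ∑ m ∈ Finset.Icc 1 N, w n m := by
        refine Finset.sum_le_sum_of_subset_of_nonneg ?_ ?_
        · exact Finset.biUnion_subset.mpr fun q _ => hsub q
        · exact fun n _ _ => Finset.sum_nonneg fun m _ => hw n m

private lemma mr_log_le (N : ℕ) (hN : 0 < N) :
    ((Nat.log 2 N + 1 : ℕ) : ℝ) ≤ 2 + Real.logb 2 N := by
  have hpow : (2:ℝ) ^ (Nat.log 2 N) ≤ (N:ℝ) := by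
    exact_mod_cast Nat.pow_log_le_self 2 hN.ne'
  have h1 : ((Nat.log 2 N : ℕ) : ℝ) ≤ Real.logb 2 N := by
    calc ((Nat.log 2 N : ℕ) : ℝ) = Real.logb 2 ((2:ℝ) ^ (Nat.log 2 N)) := by
          rw [Real.logb_pow, Real.logb_self_eq_one (by norm_num), mul_one]
      _ ≤ Real.logb 2 (N:ℝ) :=
          Real.logb_le_logb_of_le (by norm_num) (by positivity) hpow
  push_cast
  linarith

/-- **Menshov–Rademacher maximal inequality.** For `S_N* = max_{1 ≤ j ≤ N} |Σ_{n=1}^j a_n X_n|`,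
`E((S_N*)²) ≤ (2 + log₂ N)² Σ_{n,m=1}^N |a_n||a_m||E(X_n conj(X_m))|`. -/
theorem menshov_rademacher_maximal_inequality
    {Ω : Type*} [MeasurableSpace Ω] (P : Measure Ω) [IsProbabilityMeasure P]
    (a : ℕ → ℂ) (X : ℕ → Ω → ℂ)
    (hmeas : ∀ n, 1 ≤ n → AEMeasurable (X n) P)
    (hnorm : ∀ n, 1 ≤ n → ∫ ω, ‖X n ω‖ ^ 2 ∂P = 1)
    (N : ℕ) (hN : 0 < N) :
    ∫⁻ ω, ENNReal.ofReal
        (((Finset.Icc 1 N).sup' (Finset.nonempty_Icc.mpr hN)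
          (fun j => ‖∑ n ∈ Finset.Icc 1 j, a n * X n ω‖)) ^ 2) ∂P ≤
      ENNReal.ofReal ((2 + Real.logb 2 N) ^ 2 *
        ∑ n ∈ Finset.Icc 1 N, ∑ m ∈ Finset.Icc 1 N,
          ‖a n‖ * ‖a m‖ * ‖∫ ω, X n ω * (starRingEnd ℂ) (X m ω) ∂P‖) := by
  classical
  have hL2 : ∀ n, 1 ≤ n → MemLp (X n) 2 P := fun n hn => mr_memLp P _ (hmeas n hn) (hnorm n hn)
  set L := Nat.log 2 N + 1 with hLdef
  set W : ℝ := ∑ n ∈ Finset.Icc 1 N, ∑ m ∈ Finset.Icc 1 N,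
      ‖a n‖ * ‖a m‖ * ‖∫ ω, X n ω * (starRingEnd ℂ) (X m ω) ∂P‖ with hWdef
  have hW0 : 0 ≤ W := Finset.sum_nonneg fun n _ => Finset.sum_nonneg fun m _ => by positivity
  have hIccIoc : ∀ j : ℕ, Finset.Icc 1 j = Finset.Ioc 0 j := fun j => Finset.Icc_add_one_left_eq_Ioc 0 j
  have hIone : ∀ k q n, n ∈ Finset.Ioc (2^(k+1)*q) (min (2^(k+1)*q + 2^k) N) → 1 ≤ n := by
    intro k q n hn
    rw [Finset.mem_Ioc] at hn
    omega
  have hIsub : ∀ k q, Finset.Ioc (2^(k+1)*q) (min (2^(k+1)*q + 2^k) N) ⊆ Finset.Icc 1 N := by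
    intro k q n hn
    rw [Finset.mem_Ioc] at hn
    rw [Finset.mem_Icc]
    exact ⟨by omega, hn.2.trans (min_le_right _ _)⟩
  have hblockMem : ∀ k q, MemLp
      (fun ω => ∑ n ∈ Finset.Ioc (2^(k+1)*q) (min (2^(k+1)*q + 2^k) N), a n * X n ω) 2 P :=
    fun k q => memLp_finset_sum _ (fun n hn => (hL2 n (hIone k q n hn)).const_mul (a n))
  have hblockInt : ∀ k q, Integrable
      (fun ω => ‖∑ n ∈ Finset.Ioc (2^(k+1)*q) (min (2^(k+1)*q + 2^k) N), a n * X n ω‖^2) P :=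
    fun k q => (memLp_two_iff_integrable_sq_norm (hblockMem k q).1).1 (hblockMem k q)
  have haeF : ∀ k q, AEMeasurable
      (fun ω => ENNReal.ofReal
        (‖∑ n ∈ Finset.Ioc (2^(k+1)*q) (min (2^(k+1)*q + 2^k) N), a n * X n ω‖^2)) P := by
    intro k q
    have hsum : AEMeasurable
        (fun ω => ∑ n ∈ Finset.Ioc (2^(k+1)*q) (min (2^(k+1)*q + 2^k) N), a n * X n ω) P :=
      Finset.aemeasurable_fun_sum _ fun n hn => (hmeas n (hIone k q n hn)).const_mul (a n)
    exact (hsum.norm.pow_const 2).ennreal_ofReal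
  calc ∫⁻ ω, ENNReal.ofReal
        (((Finset.Icc 1 N).sup' (Finset.nonempty_Icc.mpr hN)
          (fun j => ‖∑ n ∈ Finset.Icc 1 j, a n * X n ω‖)) ^ 2) ∂P
      ≤ ∫⁻ ω, ENNReal.ofReal ((L : ℝ) * ∑ k ∈ Finset.range L, ∑ q ∈ Finset.range N,
          ‖∑ n ∈ Finset.Ioc (2^(k+1)*q) (min (2^(k+1)*q + 2^k) N), a n * X n ω‖^2) ∂P := by
        refine lintegral_mono fun ω => ENNReal.ofReal_le_ofReal ?_
        obtain ⟨j, hjmem, hjeq⟩ := Finset.exists_mem_eq_sup' (Finset.nonempty_Icc.mpr hN)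
          (fun j => ‖∑ n ∈ Finset.Icc 1 j, a n * X n ω‖)
        rw [hjeq]
        rw [Finset.mem_Icc] at hjmem
        have := mr_pointwise (fun n => a n * X n ω) N hN j hjmem.1 hjmem.2
        rw [hIccIoc]
        exact this
    _ = (L : ℝ≥0∞) * ∑ k ∈ Finset.range L, ∑ q ∈ Finset.range N,
          ∫⁻ ω, ENNReal.ofReal
            (‖∑ n ∈ Finset.Ioc (2^(k+1)*q) (min (2^(k+1)*q + 2^k) N), a n * X n ω‖^2) ∂P := by
        have hptEq : ∀ ω : Ω, ENNReal.ofReal ((L : ℝ) * ∑ k ∈ Finset.range L,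
            ∑ q ∈ Finset.range N,
            ‖∑ n ∈ Finset.Ioc (2^(k+1)*q) (min (2^(k+1)*q + 2^k) N), a n * X n ω‖^2) =
            (L : ℝ≥0∞) * ∑ k ∈ Finset.range L, ∑ q ∈ Finset.range N, ENNReal.ofReal
            (‖∑ n ∈ Finset.Ioc (2^(k+1)*q) (min (2^(k+1)*q + 2^k) N), a n * X n ω‖^2) := by
          intro ω
          rw [ENNReal.ofReal_mul (by positivity), ENNReal.ofReal_natCast]
          congr 1
          rw [ENNReal.ofReal_sum_of_nonneg (fun k _ => by positivity)]
          refine Finset.sum_congr rfl fun k _ => ?_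
          rw [ENNReal.ofReal_sum_of_nonneg (fun q _ => by positivity)]
        simp only [hptEq]
        rw [lintegral_const_mul' _ _ (ENNReal.natCast_ne_top L)]
        congr 1
        rw [lintegral_finset_sum' _ (fun k _ => Finset.aemeasurable_fun_sum _ fun q _ => haeF k q)]
        refine Finset.sum_congr rfl fun k _ => ?_
        rw [lintegral_finset_sum' _ (fun q _ => haeF k q)]
    _ ≤ (L : ℝ≥0∞) * ∑ k ∈ Finset.range L, ∑ q ∈ Finset.range N, ENNReal.ofReal
          (∑ n ∈ Finset.Ioc (2^(k+1)*q) (min (2^(k+1)*q + 2^k) N),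
           ∑ m ∈ Finset.Ioc (2^(k+1)*q) (min (2^(k+1)*q + 2^k) N),
            ‖a n‖ * ‖a m‖ * ‖∫ ω, X n ω * (starRingEnd ℂ) (X m ω) ∂P‖) := by
        refine mul_le_mul_right
          (Finset.sum_le_sum fun k _ => Finset.sum_le_sum fun q _ => ?_) _
        rw [← ofReal_integral_eq_lintegral_ofReal (hblockInt k q)
          (Filter.Eventually.of_forall fun ω => by positivity)]
        exact ENNReal.ofReal_le_ofReal
          (mr_block_bound P a X _ (fun n hn => hL2 n (hIone k q n hn)))
    _ ≤ (L : ℝ≥0∞) * ∑ k ∈ Finset.range L, ENNReal.ofReal W := by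
        refine mul_le_mul_right (Finset.sum_le_sum fun k _ => ?_) _
        rw [← ENNReal.ofReal_sum_of_nonneg (fun q _ => Finset.sum_nonneg fun n _ =>
          Finset.sum_nonneg fun m _ => by positivity)]
        refine ENNReal.ofReal_le_ofReal ?_
        exact mr_sum_pairs_le N
          (fun n m => ‖a n‖ * ‖a m‖ * ‖∫ ω, X n ω * (starRingEnd ℂ) (X m ω) ∂P‖)
          (fun n m => by positivity)
          (fun q => Finset.Ioc (2^(k+1)*q) (min (2^(k+1)*q + 2^k) N)) N
          (fun q => hIsub k q)
          (fun q q' h => mr_blocks_disjoint k N h)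
    _ = (L : ℝ≥0∞) * ((L : ℝ≥0∞) * ENNReal.ofReal W) := by
        rw [Finset.sum_const, Finset.card_range, nsmul_eq_mul]
    _ ≤ ENNReal.ofReal ((2 + Real.logb 2 N) ^ 2 * W) := by
        have hLb : ((L : ℕ) : ℝ) ≤ 2 + Real.logb 2 N := mr_log_le N hN
        have hc : ((L : ℕ) : ℝ) * ((L : ℕ) : ℝ) ≤ (2 + Real.logb 2 N) ^ 2 := by
          rw [pow_two]
          have h0 : (0:ℝ) ≤ ((L : ℕ) : ℝ) := Nat.cast_nonneg L
          exact mul_le_mul hLb hLb h0 (h0.trans hLb)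
        rw [← ENNReal.ofReal_natCast L, ← ENNReal.ofReal_mul (Nat.cast_nonneg L),
          ← ENNReal.ofReal_mul (by positivity)]
        refine ENNReal.ofReal_le_ofReal ?_
        calc ((L : ℕ) : ℝ) * (((L : ℕ) : ℝ) * W) = (((L:ℕ):ℝ) * ((L:ℕ):ℝ)) * W := by ring
          _ ≤ (2 + Real.logb 2 N) ^ 2 * W := mul_le_mul_of_nonneg_right hc hW0
end

section
/- Let (a_n)_{n≥1} be a sequence of complex numbers and (X_n)_{n≥1} a sequence of complex-valued random variables with E(|X_n|^2) = 1 for all n. If N = 2^r for some integer r ≥ 1 and S_N* = max_{1 ≤ j ≤ N} |Σ_{n=1}^j a_n X_n|, then E( (S_N*)² ) ≤ (1 + log₂ N)² · Σ_{n,m=1}^N |a_n| |a_m| |E(X_n · conj(X_m))|. -/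
open MeasureTheory Filter
open scoped ENNReal

/-- Telescoping sum over a decreasing chain of cut points. -/
lemma MR_tele_sum {M : Type*} [AddCommMonoid M] (v : ℕ → M) (c : ℕ → ℕ)
    (hc : ∀ k, c (k + 1) ≤ c k) (m : ℕ) :
    ∑ k ∈ Finset.range m, ∑ n ∈ Finset.Ioc (c (k + 1)) (c k), v n
      = ∑ n ∈ Finset.Ioc (c m) (c 0), v n := by
  have hmono : Antitone c := antitone_nat_of_succ_le hc
  induction m with
  | zero => simp
  | succ m ih =>
    rw [Finset.sum_range_succ, ih]
    have hdisj : Disjoint (Finset.Ioc (c (m + 1)) (c m)) (Finset.Ioc (c m) (c 0)) := by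
      simp only [Finset.disjoint_left, Finset.mem_Ioc]
      omega
    rw [add_comm, ← Finset.sum_union hdisj,
      Finset.Ioc_union_Ioc_eq_Ioc (hc m) (hmono (Nat.zero_le m))]

/-- Consecutive blocks of length `B` partition `Ioc 0 (M*B)`. -/
lemma MR_part_sum {M : Type*} [AddCommMonoid M] (v : ℕ → M) (B : ℕ) (Mm : ℕ) :
    ∑ i ∈ Finset.range Mm, ∑ n ∈ Finset.Ioc (i * B) ((i + 1) * B), v n
      = ∑ n ∈ Finset.Ioc 0 (Mm * B), v n := by
  induction Mm with
  | zero => simp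
  | succ m ih =>
    rw [Finset.sum_range_succ, ih]
    have hdisj : Disjoint (Finset.Ioc 0 (m * B)) (Finset.Ioc (m * B) ((m + 1) * B)) := by
      simp only [Finset.disjoint_left, Finset.mem_Ioc]
      omega
    rw [← Finset.sum_union hdisj,
      Finset.Ioc_union_Ioc_eq_Ioc (Nat.zero_le _) (by nlinarith)]

lemma MR_count (r : ℕ) (c' : ℕ → ℕ → ℝ) (hc' : ∀ n m, 0 ≤ c' n m) :
    ∑ p ∈ (Finset.range (r + 1) ×ˢ Finset.range (2 ^ r)).filter
        (fun p => (p.2 + 1) * 2 ^ p.1 ≤ 2 ^ r),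
      ∑ n ∈ Finset.Ioc (p.2 * 2 ^ p.1) ((p.2 + 1) * 2 ^ p.1),
        ∑ m ∈ Finset.Ioc (p.2 * 2 ^ p.1) ((p.2 + 1) * 2 ^ p.1), c' n m
      ≤ ((r : ℝ) + 1) * ∑ n ∈ Finset.Icc 1 (2 ^ r), ∑ m ∈ Finset.Icc 1 (2 ^ r), c' n m := by
  classical
  rw [Finset.sum_filter, Finset.sum_product]
  have hIcc : Finset.Icc 1 (2 ^ r) = Finset.Ioc 0 (2 ^ r) := by
    rw [← Finset.Icc_add_one_left_eq_Ioc, zero_add]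
  have hkey : ∀ k ∈ Finset.range (r + 1),
      (∑ i ∈ Finset.range (2 ^ r), if (i + 1) * 2 ^ k ≤ 2 ^ r then
        ∑ n ∈ Finset.Ioc (i * 2 ^ k) ((i + 1) * 2 ^ k),
          ∑ m ∈ Finset.Ioc (i * 2 ^ k) ((i + 1) * 2 ^ k), c' n m else 0)
      ≤ ∑ n ∈ Finset.Icc 1 (2 ^ r), ∑ m ∈ Finset.Icc 1 (2 ^ r), c' n m := by
    intro k hk
    have hkr : k ≤ r := by
      rw [Finset.mem_range] at hk; omega
    have hpowsplit : 2 ^ (r - k) * 2 ^ k = 2 ^ r := by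
      rw [← pow_add]
      congr 1
      omega
    have hp : 0 < 2 ^ k := Nat.pow_pos (by norm_num)
    have hfilter : (Finset.range (2 ^ r)).filter (fun i => (i + 1) * 2 ^ k ≤ 2 ^ r)
        = Finset.range (2 ^ (r - k)) := by
      ext i
      simp only [Finset.mem_filter, Finset.mem_range]
      constructor
      · rintro ⟨-, h2⟩
        rw [← hpowsplit] at h2
        have := Nat.le_of_mul_le_mul_right h2 hp
        omega
      · intro h
        have h1 : (i + 1) * 2 ^ k ≤ 2 ^ (r - k) * 2 ^ k :=
          Nat.mul_le_mul_right _ (by omega)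
        rw [hpowsplit] at h1
        constructor
        · have : i ≤ i * 2 ^ k := Nat.le_mul_of_pos_right i hp
          nlinarith
        · exact h1
    rw [← Finset.sum_filter, hfilter]
    calc ∑ i ∈ Finset.range (2 ^ (r - k)),
          ∑ n ∈ Finset.Ioc (i * 2 ^ k) ((i + 1) * 2 ^ k),
            ∑ m ∈ Finset.Ioc (i * 2 ^ k) ((i + 1) * 2 ^ k), c' n m
        ≤ ∑ i ∈ Finset.range (2 ^ (r - k)),
          ∑ n ∈ Finset.Ioc (i * 2 ^ k) ((i + 1) * 2 ^ k),
            ∑ m ∈ Finset.Icc 1 (2 ^ r), c' n m := by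
          apply Finset.sum_le_sum
          intro i hi
          apply Finset.sum_le_sum
          intro n hn
          apply Finset.sum_le_sum_of_subset_of_nonneg
          · rw [Finset.mem_range] at hi
            intro m hm
            rw [Finset.mem_Ioc] at hm
            rw [Finset.mem_Icc]
            have h1 : (i + 1) * 2 ^ k ≤ 2 ^ r := by
              rw [← hpowsplit]
              exact Nat.mul_le_mul_right _ (by omega)
            omega
          · intro m _ _
            exact hc' n m
      _ = ∑ n ∈ Finset.Icc 1 (2 ^ r), ∑ m ∈ Finset.Icc 1 (2 ^ r), c' n m := by
          rw [MR_part_sum (fun n => ∑ m ∈ Finset.Icc 1 (2 ^ r), c' n m) (2 ^ k) (2 ^ (r - k)),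
            hpowsplit, hIcc]
  calc ∑ k ∈ Finset.range (r + 1), (∑ i ∈ Finset.range (2 ^ r),
        if (i + 1) * 2 ^ k ≤ 2 ^ r then
          ∑ n ∈ Finset.Ioc (i * 2 ^ k) ((i + 1) * 2 ^ k),
            ∑ m ∈ Finset.Ioc (i * 2 ^ k) ((i + 1) * 2 ^ k), c' n m else 0)
      ≤ ∑ k ∈ Finset.range (r + 1),
          ∑ n ∈ Finset.Icc 1 (2 ^ r), ∑ m ∈ Finset.Icc 1 (2 ^ r), c' n m :=
        Finset.sum_le_sum hkey
    _ = ((r : ℝ) + 1) * ∑ n ∈ Finset.Icc 1 (2 ^ r), ∑ m ∈ Finset.Icc 1 (2 ^ r), c' n m := by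
        rw [Finset.sum_const, Finset.card_range, nsmul_eq_mul]
        push_cast
        ring

lemma MR_pointwise (r j : ℕ) (hj1 : 1 ≤ j) (hj : j ≤ 2 ^ r) (u : ℕ → ℂ) :
    ‖∑ n ∈ Finset.Icc 1 j, u n‖ ^ 2 ≤
      ((r : ℝ) + 1) * ∑ p ∈ (Finset.range (r + 1) ×ˢ Finset.range (2 ^ r)).filter
          (fun p => (p.2 + 1) * 2 ^ p.1 ≤ 2 ^ r),
        ‖∑ n ∈ Finset.Ioc (p.2 * 2 ^ p.1) ((p.2 + 1) * 2 ^ p.1), u n‖ ^ 2 := by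
  classical
  set c : ℕ → ℕ := fun k => 2 ^ k * (j / 2 ^ k) with hcdef
  have hc0 : c 0 = j := by simp [hcdef]
  have hcle : ∀ k, c k ≤ j := fun k => Nat.mul_div_le j (2 ^ k)
  have hcsucc : ∀ k, c (k + 1) = 2 ^ k * (2 * (j / 2 ^ k / 2)) := by
    intro k
    have h1 : j / 2 ^ (k + 1) = j / 2 ^ k / 2 := by
      rw [Nat.div_div_eq_div_mul, pow_succ]
    simp only [hcdef]
    rw [pow_succ, ← Nat.div_div_eq_div_mul]
    ring
  have hcstep : ∀ k, c (k + 1) ≤ c k := by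
    intro k
    rw [hcsucc k]
    exact Nat.mul_le_mul_left _ (by omega)
  have hcstep2 : ∀ k, c k ≤ c (k + 1) + 2 ^ k := by
    intro k
    rw [hcsucc k]
    calc c k = 2 ^ k * (j / 2 ^ k) := rfl
      _ ≤ 2 ^ k * (2 * (j / 2 ^ k / 2) + 1) := Nat.mul_le_mul_left _ (by omega)
      _ = 2 ^ k * (2 * (j / 2 ^ k / 2)) + 2 ^ k := by ring
  have hcr : c (r + 1) = 0 := by
    have h2 : (2 : ℕ) ^ (r + 1) = 2 ^ r * 2 := pow_succ 2 r
    have : j < 2 ^ (r + 1) := by omega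
    simp [hcdef, Nat.div_eq_of_lt this]
  have hdecomp : ∑ n ∈ Finset.Icc 1 j, u n
      = ∑ k ∈ Finset.range (r + 1), ∑ n ∈ Finset.Ioc (c (k + 1)) (c k), u n := by
    rw [MR_tele_sum u c hcstep (r + 1), hc0, hcr, ← Finset.Icc_add_one_left_eq_Ioc, zero_add]
  rw [hdecomp]
  have step1 : ‖∑ k ∈ Finset.range (r + 1), ∑ n ∈ Finset.Ioc (c (k + 1)) (c k), u n‖ ^ 2
      ≤ ((r : ℝ) + 1) * ∑ k ∈ Finset.range (r + 1),
          ‖∑ n ∈ Finset.Ioc (c (k + 1)) (c k), u n‖ ^ 2 := by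
    calc ‖∑ k ∈ Finset.range (r + 1), ∑ n ∈ Finset.Ioc (c (k + 1)) (c k), u n‖ ^ 2
        ≤ (∑ k ∈ Finset.range (r + 1), ‖∑ n ∈ Finset.Ioc (c (k + 1)) (c k), u n‖) ^ 2 := by
          apply pow_le_pow_left₀ (norm_nonneg _) (norm_sum_le _ _)
      _ ≤ ((r : ℝ) + 1) * ∑ k ∈ Finset.range (r + 1),
            ‖∑ n ∈ Finset.Ioc (c (k + 1)) (c k), u n‖ ^ 2 := by
          have := sq_sum_le_card_mul_sum_sq (s := Finset.range (r + 1))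
            (f := fun k => ‖∑ n ∈ Finset.Ioc (c (k + 1)) (c k), u n‖)
          simpa [add_comm] using this
  refine step1.trans (mul_le_mul_of_nonneg_left ?_ (by positivity))
  rw [Finset.sum_filter, Finset.sum_product]
  apply Finset.sum_le_sum
  intro k hk
  by_cases hek : c (k + 1) = c k
  · rw [hek, Finset.Ioc_self, Finset.sum_empty, norm_zero]
    rw [show (0 : ℝ) ^ 2 = 0 from by norm_num]
    exact Finset.sum_nonneg fun i _ => by dsimp only; split <;> positivity
  · have hlt : c (k + 1) < c k := lt_of_le_of_ne (hcstep k) hek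
    set i : ℕ := 2 * (j / 2 ^ k / 2) with hidef
    have hci : c (k + 1) = i * 2 ^ k := by rw [hcsucc k]; ring
    have hq : 2 * (j / 2 ^ k / 2) < j / 2 ^ k := by
      have h := hlt
      rw [hcsucc k] at h
      simp only [hcdef] at h
      exact lt_of_mul_lt_mul_left h (Nat.zero_le _)
    have hodd : j / 2 ^ k = 2 * (j / 2 ^ k / 2) + 1 := by
      generalize hg : j / 2 ^ k = q at hq ⊢
      omega
    have hck : c k = (i + 1) * 2 ^ k := by
      simp only [hcdef]
      rw [hodd, hidef]
      ring
    have hcond : (i + 1) * 2 ^ k ≤ 2 ^ r := by rw [← hck]; exact (hcle k).trans hj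
    have hip : 0 < 2 ^ k := Nat.pow_pos (by norm_num)
    have hi : i ∈ Finset.range (2 ^ r) := by
      rw [Finset.mem_range]
      have : i * 2 ^ k < (i + 1) * 2 ^ k := by nlinarith
      have h4 : i ≤ i * 2 ^ k := Nat.le_mul_of_pos_right i hip
      omega
    have hval : ‖∑ n ∈ Finset.Ioc (c (k + 1)) (c k), u n‖ ^ 2
        = (if (i + 1) * 2 ^ k ≤ 2 ^ r then
            ‖∑ n ∈ Finset.Ioc (i * 2 ^ k) ((i + 1) * 2 ^ k), u n‖ ^ 2 else 0) := by
      rw [if_pos hcond, hci, hck]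
    rw [hval]
    exact Finset.single_le_sum (f := fun i => if (i + 1) * 2 ^ k ≤ 2 ^ r then
      ‖∑ n ∈ Finset.Ioc (i * 2 ^ k) ((i + 1) * 2 ^ k), u n‖ ^ 2 else 0)
      (fun i _ => by split <;> positivity) hi

lemma MR_block_bound {Ω : Type*} [MeasurableSpace Ω] (P : Measure Ω) [IsProbabilityMeasure P]
    (a : ℕ → ℂ) (X : ℕ → Ω → ℂ) (s : Finset ℕ)
    (hL2 : ∀ n ∈ s, MemLp (X n) 2 P) :
    ∫⁻ ω, ENNReal.ofReal (‖∑ n ∈ s, a n * X n ω‖ ^ 2) ∂P ≤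
      ENNReal.ofReal (∑ n ∈ s, ∑ m ∈ s,
        ‖a n‖ * ‖a m‖ * ‖∫ ω, X n ω * (starRingEnd ℂ) (X m ω) ∂P‖) := by
  classical
  set Z : Ω → ℂ := fun ω => ∑ n ∈ s, a n * X n ω with hZ
  have hZ2 : MemLp Z 2 P := by
    have hfun : Z = ∑ n ∈ s, fun ω => a n * X n ω := by
      funext ω; simp [hZ, Finset.sum_apply]
    rw [hfun]
    exact memLp_finset_sum' s fun n (hn : n ∈ s) => (hL2 n hn).const_mul (a n)
  have hconj : ∀ m ∈ s, MemLp (fun ω => (starRingEnd ℂ) (X m ω)) 2 P := by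
    intro m hm
    refine (hL2 m hm).of_le
      (RCLike.continuous_conj.comp_aestronglyMeasurable (hL2 m hm).aestronglyMeasurable)
      (Filter.Eventually.of_forall fun ω => ?_)
    simp
  have hint : ∀ n ∈ s, ∀ m ∈ s,
      Integrable (fun ω => X n ω * (starRingEnd ℂ) (X m ω)) P := by
    intro n hn m hm
    have := ((hconj m hm).smul (r := 1) (hL2 n hn))
    rw [← memLp_one_iff_integrable]
    exact this
  have hZint : Integrable (fun ω => ‖Z ω‖ ^ 2) P :=
    (memLp_two_iff_integrable_sq_norm hZ2.aestronglyMeasurable).1 hZ2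
  -- pointwise expansion
  have hpt : ∀ ω, ‖Z ω‖ ^ 2 =
      (∑ n ∈ s, ∑ m ∈ s,
        (a n * (starRingEnd ℂ) (a m)) * (X n ω * (starRingEnd ℂ) (X m ω))).re := by
    intro ω
    have h1 : (Z ω * (starRingEnd ℂ) (Z ω)) = ((Complex.normSq (Z ω) : ℝ) : ℂ) :=
      Complex.mul_conj _
    have h2 : Z ω * (starRingEnd ℂ) (Z ω) =
        ∑ n ∈ s, ∑ m ∈ s,
          (a n * (starRingEnd ℂ) (a m)) * (X n ω * (starRingEnd ℂ) (X m ω)) := by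
      rw [hZ, map_sum, Finset.sum_mul_sum]
      refine Finset.sum_congr rfl fun n _ => Finset.sum_congr rfl fun m _ => ?_
      simp only [map_mul]
      ring
    rw [← h2, h1]
    simp [Complex.normSq_eq_norm_sq, ← Complex.ofReal_pow]
  have hFint : Integrable (fun ω => ∑ n ∈ s, ∑ m ∈ s,
      (a n * (starRingEnd ℂ) (a m)) * (X n ω * (starRingEnd ℂ) (X m ω))) P := by
    apply integrable_finset_sum
    intro n hn
    apply integrable_finset_sum
    intro m hm
    exact (hint n hn m hm).const_mul _
  have hIeq : ∫ ω, ‖Z ω‖ ^ 2 ∂P =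
      (∑ n ∈ s, ∑ m ∈ s, (a n * (starRingEnd ℂ) (a m)) *
        ∫ ω, X n ω * (starRingEnd ℂ) (X m ω) ∂P).re := by
    have : ∫ ω, ‖Z ω‖ ^ 2 ∂P = (∫ ω, (∑ n ∈ s, ∑ m ∈ s,
        (a n * (starRingEnd ℂ) (a m)) * (X n ω * (starRingEnd ℂ) (X m ω))) ∂P).re := by
      have h3 := integral_re hFint
      simp only [RCLike.re_to_complex] at h3
      rw [← h3]
      exact integral_congr_ae (Filter.Eventually.of_forall fun ω => hpt ω)
    rw [this]
    congr 1
    rw [integral_finset_sum _ (fun n hn => integrable_finset_sum _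
      (fun m hm => (hint n hn m hm).const_mul _))]
    refine Finset.sum_congr rfl fun n hn => ?_
    rw [integral_finset_sum _ (fun m hm => (hint n hn m hm).const_mul _)]
    exact Finset.sum_congr rfl fun m hm => integral_const_mul _ _
  have hbound : ∫ ω, ‖Z ω‖ ^ 2 ∂P ≤
      ∑ n ∈ s, ∑ m ∈ s, ‖a n‖ * ‖a m‖ * ‖∫ ω, X n ω * (starRingEnd ℂ) (X m ω) ∂P‖ := by
    rw [hIeq]
    calc (∑ n ∈ s, ∑ m ∈ s, (a n * (starRingEnd ℂ) (a m)) *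
          ∫ ω, X n ω * (starRingEnd ℂ) (X m ω) ∂P).re
        ≤ ‖∑ n ∈ s, ∑ m ∈ s, (a n * (starRingEnd ℂ) (a m)) *
          ∫ ω, X n ω * (starRingEnd ℂ) (X m ω) ∂P‖ := Complex.re_le_norm _
      _ ≤ ∑ n ∈ s, ∑ m ∈ s, ‖(a n * (starRingEnd ℂ) (a m)) *
          ∫ ω, X n ω * (starRingEnd ℂ) (X m ω) ∂P‖ := by
          refine (norm_sum_le _ _).trans (Finset.sum_le_sum fun n _ => norm_sum_le _ _)
      _ = ∑ n ∈ s, ∑ m ∈ s, ‖a n‖ * ‖a m‖ *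
          ‖∫ ω, X n ω * (starRingEnd ℂ) (X m ω) ∂P‖ := by
          refine Finset.sum_congr rfl fun n _ => Finset.sum_congr rfl fun m _ => ?_
          simp [norm_mul]
  calc ∫⁻ ω, ENNReal.ofReal (‖Z ω‖ ^ 2) ∂P
      = ENNReal.ofReal (∫ ω, ‖Z ω‖ ^ 2 ∂P) :=
        (ofReal_integral_eq_lintegral_ofReal hZint
          (Filter.Eventually.of_forall fun ω => by positivity)).symm
    _ ≤ _ := ENNReal.ofReal_le_ofReal hbound

/-- **Menshov–Rademacher maximal inequality, dyadic case.** If `N = 2^r` with `r ≥ 1`, then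
for `S_N* = max_{1 ≤ j ≤ N} |Σ_{n=1}^j a_n X_n|` one has
`E((S_N*)²) ≤ (1 + log₂ N)² Σ_{n,m=1}^N |a_n||a_m||E(X_n conj(X_m))|`. -/
theorem menshov_rademacher_maximal_inequality_dyadic
    {Ω : Type*} [MeasurableSpace Ω] (P : Measure Ω) [IsProbabilityMeasure P]
    (a : ℕ → ℂ) (X : ℕ → Ω → ℂ)
    (hmeas : ∀ n, 1 ≤ n → AEMeasurable (X n) P)
    (hnorm : ∀ n, 1 ≤ n → ∫ ω, ‖X n ω‖ ^ 2 ∂P = 1)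
    (r N : ℕ) (hr : 1 ≤ r) (hN : N = 2 ^ r) (hN0 : 0 < N) :
    ∫⁻ ω, ENNReal.ofReal
        (((Finset.Icc 1 N).sup' (Finset.nonempty_Icc.mpr hN0)
          (fun j => ‖∑ n ∈ Finset.Icc 1 j, a n * X n ω‖)) ^ 2) ∂P ≤
      ENNReal.ofReal ((1 + Real.logb 2 N) ^ 2 *
        ∑ n ∈ Finset.Icc 1 N, ∑ m ∈ Finset.Icc 1 N,
          ‖a n‖ * ‖a m‖ * ‖∫ ω, X n ω * (starRingEnd ℂ) (X m ω) ∂P‖) := by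
  classical
  have hL2 : ∀ n, 1 ≤ n → MemLp (X n) 2 P := by
    intro n hn
    have h1 := hnorm n hn
    have hInt : Integrable (fun ω => ‖X n ω‖ ^ 2) P := by
      by_contra h
      rw [integral_undef h] at h1
      norm_num at h1
    exact (memLp_two_iff_integrable_sq_norm (hmeas n hn).aestronglyMeasurable).2 hInt
  subst hN
  set D : Finset (ℕ × ℕ) := (Finset.range (r + 1) ×ˢ Finset.range (2 ^ r)).filter
    (fun p => (p.2 + 1) * 2 ^ p.1 ≤ 2 ^ r) with hD
  have hblock1 : ∀ (p : ℕ × ℕ) (n : ℕ),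
      n ∈ Finset.Ioc (p.2 * 2 ^ p.1) ((p.2 + 1) * 2 ^ p.1) → 1 ≤ n := by
    intro p n hn
    rw [Finset.mem_Ioc] at hn
    omega
  have hptw : ∀ ω : Ω,
      (((Finset.Icc 1 (2 ^ r)).sup' (Finset.nonempty_Icc.mpr hN0)
        (fun j => ‖∑ n ∈ Finset.Icc 1 j, a n * X n ω‖)) ^ 2)
      ≤ ((r : ℝ) + 1) * ∑ p ∈ D,
          ‖∑ n ∈ Finset.Ioc (p.2 * 2 ^ p.1) ((p.2 + 1) * 2 ^ p.1), a n * X n ω‖ ^ 2 := by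
    intro ω
    obtain ⟨j, hj, hsup⟩ := Finset.exists_mem_eq_sup' (Finset.nonempty_Icc.mpr hN0)
      (fun j => ‖∑ n ∈ Finset.Icc 1 j, a n * X n ω‖)
    rw [hsup, Finset.mem_Icc] at *
    exact MR_pointwise r j hj.1 hj.2 (fun n => a n * X n ω)
  have hTmeas : ∀ p ∈ D, AEMeasurable (fun ω => ENNReal.ofReal
      (‖∑ n ∈ Finset.Ioc (p.2 * 2 ^ p.1) ((p.2 + 1) * 2 ^ p.1), a n * X n ω‖ ^ 2)) P := by
    intro p _
    apply ENNReal.measurable_ofReal.comp_aemeasurable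
    apply AEMeasurable.pow_const
    apply AEMeasurable.norm
    exact Finset.aemeasurable_fun_sum _ fun n hn =>
      aemeasurable_const.mul (hmeas n (hblock1 p n hn))
  have hnn : ∀ (n m : ℕ), (0:ℝ) ≤ ‖a n‖ * ‖a m‖ * ‖∫ ω, X n ω * (starRingEnd ℂ) (X m ω) ∂P‖ :=
    fun n m => by positivity
  refine le_trans (lintegral_mono fun ω => ENNReal.ofReal_le_ofReal (hptw ω)) ?_
  calc ∫⁻ ω, ENNReal.ofReal (((r : ℝ) + 1) * ∑ p ∈ D,
        ‖∑ n ∈ Finset.Ioc (p.2 * 2 ^ p.1) ((p.2 + 1) * 2 ^ p.1), a n * X n ω‖ ^ 2) ∂P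
      = ENNReal.ofReal ((r : ℝ) + 1) * ∑ p ∈ D, ∫⁻ ω, ENNReal.ofReal
          (‖∑ n ∈ Finset.Ioc (p.2 * 2 ^ p.1) ((p.2 + 1) * 2 ^ p.1), a n * X n ω‖ ^ 2) ∂P := by
        have heq : ∀ ω : Ω, ENNReal.ofReal (((r : ℝ) + 1) * ∑ p ∈ D,
            ‖∑ n ∈ Finset.Ioc (p.2 * 2 ^ p.1) ((p.2 + 1) * 2 ^ p.1), a n * X n ω‖ ^ 2)
            = ENNReal.ofReal ((r : ℝ) + 1) * ∑ p ∈ D, ENNReal.ofReal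
              (‖∑ n ∈ Finset.Ioc (p.2 * 2 ^ p.1) ((p.2 + 1) * 2 ^ p.1), a n * X n ω‖ ^ 2) := by
          intro ω
          rw [ENNReal.ofReal_mul (by positivity),
            ENNReal.ofReal_sum_of_nonneg (fun p _ => by positivity)]
        simp_rw [heq]
        rw [lintegral_const_mul'' _ (Finset.aemeasurable_fun_sum D hTmeas),
          lintegral_finset_sum' D hTmeas]
    _ ≤ ENNReal.ofReal ((r : ℝ) + 1) * ∑ p ∈ D, ENNReal.ofReal
          (∑ n ∈ Finset.Ioc (p.2 * 2 ^ p.1) ((p.2 + 1) * 2 ^ p.1),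
            ∑ m ∈ Finset.Ioc (p.2 * 2 ^ p.1) ((p.2 + 1) * 2 ^ p.1),
              ‖a n‖ * ‖a m‖ * ‖∫ ω, X n ω * (starRingEnd ℂ) (X m ω) ∂P‖) := by
        refine mul_le_mul_right (Finset.sum_le_sum fun p hp => ?_) _
        exact MR_block_bound P a X _ (fun n hn => hL2 n (hblock1 p n hn))
    _ = ENNReal.ofReal (((r : ℝ) + 1) * ∑ p ∈ D,
          ∑ n ∈ Finset.Ioc (p.2 * 2 ^ p.1) ((p.2 + 1) * 2 ^ p.1),
            ∑ m ∈ Finset.Ioc (p.2 * 2 ^ p.1) ((p.2 + 1) * 2 ^ p.1),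
              ‖a n‖ * ‖a m‖ * ‖∫ ω, X n ω * (starRingEnd ℂ) (X m ω) ∂P‖) := by
        rw [ENNReal.ofReal_mul (by positivity),
          ENNReal.ofReal_sum_of_nonneg (fun p _ => Finset.sum_nonneg fun n _ =>
            Finset.sum_nonneg fun m _ => hnn n m)]
    _ ≤ ENNReal.ofReal (((r : ℝ) + 1) * (((r : ℝ) + 1) *
          ∑ n ∈ Finset.Icc 1 (2 ^ r), ∑ m ∈ Finset.Icc 1 (2 ^ r),
            ‖a n‖ * ‖a m‖ * ‖∫ ω, X n ω * (starRingEnd ℂ) (X m ω) ∂P‖)) := by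
        apply ENNReal.ofReal_le_ofReal
        apply mul_le_mul_of_nonneg_left _ (by positivity)
        exact MR_count r _ hnn
    _ = ENNReal.ofReal ((1 + Real.logb 2 ((2 : ℕ) ^ r : ℕ)) ^ 2 *
          ∑ n ∈ Finset.Icc 1 (2 ^ r), ∑ m ∈ Finset.Icc 1 (2 ^ r),
            ‖a n‖ * ‖a m‖ * ‖∫ ω, X n ω * (starRingEnd ℂ) (X m ω) ∂P‖) := by
        congr 1
        have hlogb : (1 : ℝ) + Real.logb 2 (((2 : ℕ) ^ r : ℕ) : ℝ) = (r : ℝ) + 1 := by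
          have hcast : (((2 : ℕ) ^ r : ℕ) : ℝ) = (2 : ℝ) ^ (r : ℝ) := by
            push_cast
            rw [Real.rpow_natCast]
          rw [hcast, Real.logb_rpow (by norm_num) (by norm_num)]
          ring
        rw [hlogb]
        ring
end

section
/- Let (a_n)_{n≥1} be a sequence of complex numbers and (X_n)_{n≥1} a sequence of real-valued random variables such that E(X_n²) = 1 for all n and E(X_n X_m) ≤ 0 for all n ≠ m. If Σ_{n=1}^∞ |a_n|² · log₂²(n+1) < ∞, then the series Σ_{n=1}^∞ a_n X_n converges almost surely. -/
open MeasureTheory Filter Finset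


lemma ae_summable_of_summable_integral {Ω : Type*} [MeasurableSpace Ω] {P : Measure Ω}
    {f : ℕ → Ω → ℝ} (hmeas : ∀ p, AEMeasurable (f p) P)
    (hnn : ∀ p ω, 0 ≤ f p ω) (hint : ∀ p, Integrable (f p) P)
    (hsum : Summable fun p => ∫ ω, f p ω ∂P) :
    ∀ᵐ ω ∂P, Summable fun p => f p ω := by
  have key : ∫⁻ ω, ∑' p, ENNReal.ofReal (f p ω) ∂P ≠ ⊤ := by
    rw [lintegral_tsum (fun p => (hmeas p).ennreal_ofReal)]
    have h1 : ∀ p, ∫⁻ ω, ENNReal.ofReal (f p ω) ∂P = ENNReal.ofReal (∫ ω, f p ω ∂P) := fun p =>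
      (ofReal_integral_eq_lintegral_ofReal (hint p) (Filter.Eventually.of_forall (hnn p))).symm
    simp_rw [h1]
    rw [← ENNReal.ofReal_tsum_of_nonneg (fun p => integral_nonneg (hnn p)) hsum]
    exact ENNReal.ofReal_ne_top
  have h2 := ae_lt_top' (AEMeasurable.ennreal_tsum fun p => (hmeas p).ennreal_ofReal) key
  filter_upwards [h2] with ω hω
  have hs : Summable fun p => (ENNReal.ofReal (f p ω)).toReal := ENNReal.summable_toReal hω.ne
  have he : (fun p => (ENNReal.ofReal (f p ω)).toReal) = fun p => f p ω :=
    funext fun p => ENNReal.toReal_ofReal (hnn p ω)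
  rwa [he] at hs

lemma abs_integral_le_sqrt {Ω : Type*} [MeasurableSpace Ω] (P : Measure Ω)
    [IsProbabilityMeasure P] {f : Ω → ℝ} (hmeas : AEStronglyMeasurable f P)
    (hint : Integrable (fun ω => f ω ^ 2) P) :
    ∫ ω, |f ω| ∂P ≤ Real.sqrt (∫ ω, f ω ^ 2 ∂P) := by
  have hf2 : MemLp f 2 P := (memLp_two_iff_integrable_sq hmeas).2 hint
  have hfa : Integrable (fun ω => |f ω|) P := (hf2.integrable (by norm_num)).abs
  set c := ∫ ω, |f ω| ∂P with hc
  have hc0 : 0 ≤ c := integral_nonneg fun ω => abs_nonneg _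
  have expand : ∫ ω, (|f ω| - c) ^ 2 ∂P = ∫ ω, f ω ^ 2 ∂P - c ^ 2 := by
    have h1 : ∀ ω, (|f ω| - c) ^ 2 = f ω ^ 2 - 2 * c * |f ω| + c ^ 2 := by
      intro ω; rw [← sq_abs (f ω)]; ring
    simp_rw [h1]
    have hA : Integrable (fun ω => f ω ^ 2 - 2 * c * |f ω|) P := hint.sub (hfa.const_mul _)
    rw [integral_add hA (integrable_const _), integral_sub hint (hfa.const_mul _),
      MeasureTheory.integral_const_mul, integral_const]
    simp only [probReal_univ, measure_univ, ENNReal.toReal_one, smul_eq_mul, one_mul, ← hc]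
    ring
  have key : 0 ≤ ∫ ω, (|f ω| - c) ^ 2 ∂P := integral_nonneg fun ω => sq_nonneg _
  rw [expand] at key
  have : c ^ 2 ≤ ∫ ω, f ω ^ 2 ∂P := by linarith
  exact (Real.le_sqrt hc0 (integral_nonneg fun ω => sq_nonneg _)).2 this


lemma sum_blocks_Ioc (g : ℕ → ℝ) (c L N : ℕ) :
    ∑ i ∈ Finset.range N, ∑ n ∈ Finset.Ioc (c + i * L) (c + i * L + L), g n
      = ∑ n ∈ Finset.Ioc c (c + N * L), g n := by
  induction N with
  | zero => simp
  | succ N ih =>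
    rw [Finset.sum_range_succ, ih]
    have h : c + (N + 1) * L = c + N * L + L := by ring
    rw [h]
    exact Finset.sum_Ioc_consecutive g (Nat.le_add_right _ _) (Nat.le_add_right _ _)

lemma dyadicF_succ (g : ℕ → ℝ) (m a : ℕ) :
    ∑ j ∈ Finset.range (m + 2), ∑ i ∈ Finset.range (2 ^ (m + 1 - j)),
        (∑ n ∈ Finset.Ioc (a + i * 2 ^ j) (a + i * 2 ^ j + 2 ^ j), g n) ^ 2
      = (∑ n ∈ Finset.Ioc a (a + 2 ^ (m + 1)), g n) ^ 2
        + (∑ j ∈ Finset.range (m + 1), ∑ i ∈ Finset.range (2 ^ (m - j)),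
            (∑ n ∈ Finset.Ioc (a + i * 2 ^ j) (a + i * 2 ^ j + 2 ^ j), g n) ^ 2)
        + ∑ j ∈ Finset.range (m + 1), ∑ i ∈ Finset.range (2 ^ (m - j)),
            (∑ n ∈ Finset.Ioc (a + 2 ^ m + i * 2 ^ j) (a + 2 ^ m + i * 2 ^ j + 2 ^ j), g n) ^ 2 := by
  rw [Finset.sum_range_succ]
  have htop : ∑ i ∈ Finset.range (2 ^ (m + 1 - (m + 1))),
      (∑ n ∈ Finset.Ioc (a + i * 2 ^ (m + 1)) (a + i * 2 ^ (m + 1) + 2 ^ (m + 1)), g n) ^ 2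
      = (∑ n ∈ Finset.Ioc a (a + 2 ^ (m + 1)), g n) ^ 2 := by
    simp
  rw [htop]
  have hsplit : ∀ j ∈ Finset.range (m + 1),
      ∑ i ∈ Finset.range (2 ^ (m + 1 - j)),
          (∑ n ∈ Finset.Ioc (a + i * 2 ^ j) (a + i * 2 ^ j + 2 ^ j), g n) ^ 2
        = (∑ i ∈ Finset.range (2 ^ (m - j)),
            (∑ n ∈ Finset.Ioc (a + i * 2 ^ j) (a + i * 2 ^ j + 2 ^ j), g n) ^ 2)
          + ∑ i ∈ Finset.range (2 ^ (m - j)),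
            (∑ n ∈ Finset.Ioc (a + 2 ^ m + i * 2 ^ j) (a + 2 ^ m + i * 2 ^ j + 2 ^ j), g n) ^ 2 := by
    intro j hj
    rw [Finset.mem_range] at hj
    have hjm : j ≤ m := Nat.lt_succ_iff.mp hj
    have hpow : 2 ^ (m + 1 - j) = 2 ^ (m - j) + 2 ^ (m - j) := by
      have : m + 1 - j = (m - j) + 1 := by omega
      rw [this, pow_succ]; ring
    rw [hpow, Finset.sum_range_add]
    congr 1
    refine Finset.sum_congr rfl fun i _ => ?_
    have hmul : (2 ^ (m - j) + i) * 2 ^ j = 2 ^ m + i * 2 ^ j := by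
      have h2 : 2 ^ (m - j) * 2 ^ j = 2 ^ m := by
        rw [← pow_add]; congr 1; omega
      rw [add_mul, h2]
    rw [hmul, ← add_assoc]
  rw [Finset.sum_congr rfl hsplit, Finset.sum_add_distrib]
  ring
set_option maxHeartbeats 1600000 in
lemma dyadic_sq_bound (g : ℕ → ℝ) : ∀ m a k : ℕ, a < k → k ≤ a + 2 ^ m →
    (∑ n ∈ Finset.Ioc a k, g n) ^ 2
      ≤ ((m : ℝ) + 1) * ∑ j ∈ Finset.range (m + 1), ∑ i ∈ Finset.range (2 ^ (m - j)),
          (∑ n ∈ Finset.Ioc (a + i * 2 ^ j) (a + i * 2 ^ j + 2 ^ j), g n) ^ 2 := by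
  intro m
  induction m with
  | zero =>
    intro a k h1 h2
    have hk : k = a + 1 := by omega
    subst hk
    simp
  | succ m ih =>
    intro a k h1 h2
    have hpow2 : 2 ^ (m + 1) = 2 ^ m + 2 ^ m := by rw [pow_succ]; ring
    rw [hpow2, ← add_assoc] at h2
    have hrec := dyadicF_succ g m a
    rw [hrec]
    set A := ∑ j ∈ Finset.range (m + 1), ∑ i ∈ Finset.range (2 ^ (m - j)),
        (∑ n ∈ Finset.Ioc (a + i * 2 ^ j) (a + i * 2 ^ j + 2 ^ j), g n) ^ 2 with hA_def
    set B := ∑ j ∈ Finset.range (m + 1), ∑ i ∈ Finset.range (2 ^ (m - j)),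
        (∑ n ∈ Finset.Ioc (a + 2 ^ m + i * 2 ^ j) (a + 2 ^ m + i * 2 ^ j + 2 ^ j), g n) ^ 2
      with hB_def
    set t := ∑ n ∈ Finset.Ioc a (a + 2 ^ (m + 1)), g n with ht_def
    have hA0 : 0 ≤ A := by rw [hA_def]; positivity
    have hB0 : 0 ≤ B := by rw [hB_def]; positivity
    have hμ : (0 : ℝ) ≤ (m : ℝ) := Nat.cast_nonneg m
    push_cast
    by_cases hk : k ≤ a + 2 ^ m
    · have h := ih a k h1 hk
      rw [← hA_def] at h
      nlinarith [sq_nonneg t, mul_nonneg hμ hA0, mul_nonneg hμ hB0,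
        mul_nonneg hμ (sq_nonneg t)]
    · have h1' : a + 2 ^ m < k := not_le.mp hk
      have hy := ih (a + 2 ^ m) k h1' h2
      rw [← hB_def] at hy
      set x := ∑ n ∈ Finset.Ioc a (a + 2 ^ m), g n with hx_def
      set y := ∑ n ∈ Finset.Ioc (a + 2 ^ m) k, g n with hy_def
      have hx : x ^ 2 ≤ A := by
        rw [hA_def, Finset.sum_range_succ]
        have h0 : (0 : ℝ) ≤ ∑ j ∈ Finset.range m, ∑ i ∈ Finset.range (2 ^ (m - j)),
            (∑ n ∈ Finset.Ioc (a + i * 2 ^ j) (a + i * 2 ^ j + 2 ^ j), g n) ^ 2 := by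
          positivity
        have he : ∑ i ∈ Finset.range (2 ^ (m - m)),
            (∑ n ∈ Finset.Ioc (a + i * 2 ^ m) (a + i * 2 ^ m + 2 ^ m), g n) ^ 2 = x ^ 2 := by
          simp [hx_def]
        rw [he]
        linarith
      have hsum : ∑ n ∈ Finset.Ioc a k, g n = x + y :=
        (Finset.sum_Ioc_consecutive g (Nat.le_add_right a (2 ^ m)) (le_of_lt h1')).symm
      rw [hsum]
      have p1 : (((m : ℝ) + 1) * ((m : ℝ) + 2)) * x ^ 2 ≤ (((m : ℝ) + 1) * ((m : ℝ) + 2)) * A :=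
        mul_le_mul_of_nonneg_left hx (by positivity)
      have p2 : ((m : ℝ) + 2) * y ^ 2 ≤ ((m : ℝ) + 2) * (((m : ℝ) + 1) * B) :=
        mul_le_mul_of_nonneg_left hy (by positivity)
      have s := sq_nonneg (((m : ℝ) + 1) * x - y)
      have key : ((m : ℝ) + 1) * (x + y) ^ 2 ≤ ((m : ℝ) + 1) * (((m : ℝ) + 2) * (A + B)) := by
        nlinarith [p1, p2, s]
      have key2 : (x + y) ^ 2 ≤ ((m : ℝ) + 2) * (A + B) :=
        le_of_mul_le_mul_left (by linarith) (by positivity : (0 : ℝ) < (m : ℝ) + 1)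
      nlinarith [key2, sq_nonneg t, mul_nonneg hμ (sq_nonneg t)]
lemma quasi_orth {Ω : Type*} [MeasurableSpace Ω] {P : Measure Ω} [IsProbabilityMeasure P]
    {b : ℕ → ℝ} {X : ℕ → Ω → ℝ} (hb : ∀ n, 0 ≤ b n)
    (hmeas : ∀ n, 1 ≤ n → AEMeasurable (X n) P)
    (hnorm : ∀ n, 1 ≤ n → ∫ ω, X n ω ^ 2 ∂P = 1)
    (hneg : ∀ n m, 1 ≤ n → 1 ≤ m → n ≠ m → ∫ ω, X n ω * X m ω ∂P ≤ 0)
    (I : Finset ℕ) (hI : ∀ n ∈ I, 1 ≤ n) :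
    Integrable (fun ω => (∑ n ∈ I, b n * X n ω) ^ 2) P ∧
      ∫ ω, (∑ n ∈ I, b n * X n ω) ^ 2 ∂P ≤ ∑ n ∈ I, b n ^ 2 := by
  have hX2 : ∀ n, 1 ≤ n → Integrable (fun ω => X n ω ^ 2) P := by
    intro n hn
    by_contra h
    have h1 := hnorm n hn
    rw [integral_undef h] at h1
    norm_num at h1
  have hmul : ∀ n m, 1 ≤ n → 1 ≤ m → Integrable (fun ω => X n ω * X m ω) P := by
    intro n m hn hm
    have hg : Integrable (fun ω => (X n ω ^ 2 + X m ω ^ 2) / 2) P :=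
      ((hX2 n hn).add (hX2 m hm)).div_const 2
    apply Integrable.mono' hg ((hmeas n hn).mul (hmeas m hm)).aestronglyMeasurable
    filter_upwards with ω
    have h1 : ‖X n ω * X m ω‖ = |X n ω * X m ω| := rfl
    rw [Pi.mul_apply, h1]
    nlinarith [sq_nonneg (|X n ω| - |X m ω|), abs_mul (X n ω) (X m ω), sq_abs (X n ω),
      sq_abs (X m ω), abs_nonneg (X n ω * X m ω)]
  have hexp : (fun ω => (∑ n ∈ I, b n * X n ω) ^ 2)
      = fun ω => ∑ n ∈ I, ∑ m ∈ I, b n * b m * (X n ω * X m ω) := by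
    funext ω
    rw [sq, Finset.sum_mul_sum]
    exact Finset.sum_congr rfl fun n _ => Finset.sum_congr rfl fun m _ => by ring
  have hint : Integrable (fun ω => ∑ n ∈ I, ∑ m ∈ I, b n * b m * (X n ω * X m ω)) P :=
    integrable_finset_sum _ fun n hn => integrable_finset_sum _ fun m hm =>
      (hmul n m (hI n hn) (hI m hm)).const_mul _
  rw [hexp]
  refine ⟨hint, ?_⟩
  rw [integral_finset_sum _ fun n hn => integrable_finset_sum _ fun m hm =>
    (hmul n m (hI n hn) (hI m hm)).const_mul _]
  have hin : ∀ n ∈ I, ∫ ω, ∑ m ∈ I, b n * b m * (X n ω * X m ω) ∂P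
      = ∑ m ∈ I, b n * b m * ∫ ω, X n ω * X m ω ∂P := by
    intro n hn
    rw [integral_finset_sum _ fun m hm => (hmul n m (hI n hn) (hI m hm)).const_mul _]
    exact Finset.sum_congr rfl fun m _ => MeasureTheory.integral_const_mul _ _
  rw [Finset.sum_congr rfl hin]
  apply Finset.sum_le_sum
  intro n hn
  have hsplit : ∑ m ∈ I, b n * b m * ∫ ω, X n ω * X m ω ∂P
      = b n * b n * ∫ ω, X n ω * X n ω ∂P
        + ∑ m ∈ I.erase n, b n * b m * ∫ ω, X n ω * X m ω ∂P :=
    (Finset.add_sum_erase I _ hn).symm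
  rw [hsplit]
  have hXnn : ∫ ω, X n ω * X n ω ∂P = 1 := by
    have := hnorm n (hI n hn)
    simpa [sq] using this
  rw [hXnn]
  have hrest : ∑ m ∈ I.erase n, b n * b m * ∫ ω, X n ω * X m ω ∂P ≤ 0 := by
    apply Finset.sum_nonpos
    intro m hm
    have hmI := Finset.mem_of_mem_erase hm
    have hmn : m ≠ n := Finset.ne_of_mem_erase hm
    exact mul_nonpos_of_nonneg_of_nonpos (mul_nonneg (hb n) (hb m))
      (hneg n m (hI n hn) (hI m hmI) (Ne.symm hmn))
  nlinarith [sq_nonneg (b n)]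
lemma F_bound {Ω : Type*} [MeasurableSpace Ω] {P : Measure Ω} [IsProbabilityMeasure P]
    {b : ℕ → ℝ} {X : ℕ → Ω → ℝ} (hb : ∀ n, 0 ≤ b n)
    (hmeas : ∀ n, 1 ≤ n → AEMeasurable (X n) P)
    (hnorm : ∀ n, 1 ≤ n → ∫ ω, X n ω ^ 2 ∂P = 1)
    (hneg : ∀ n m, 1 ≤ n → 1 ≤ m → n ≠ m → ∫ ω, X n ω * X m ω ∂P ≤ 0)
    (m a : ℕ) :
    Integrable (fun ω => ∑ j ∈ Finset.range (m + 1), ∑ i ∈ Finset.range (2 ^ (m - j)),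
        (∑ n ∈ Finset.Ioc (a + i * 2 ^ j) (a + i * 2 ^ j + 2 ^ j), b n * X n ω) ^ 2) P ∧
      ∫ ω, (∑ j ∈ Finset.range (m + 1), ∑ i ∈ Finset.range (2 ^ (m - j)),
          (∑ n ∈ Finset.Ioc (a + i * 2 ^ j) (a + i * 2 ^ j + 2 ^ j), b n * X n ω) ^ 2) ∂P
        ≤ ((m : ℝ) + 1) * ∑ n ∈ Finset.Ioc a (a + 2 ^ m), b n ^ 2 := by
  have hIoc : ∀ c d : ℕ, ∀ n ∈ Finset.Ioc c d, 1 ≤ n := by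
    intro c d n hn
    have := (Finset.mem_Ioc.mp hn).1
    omega
  have hq : ∀ c d : ℕ, Integrable (fun ω => (∑ n ∈ Finset.Ioc c d, b n * X n ω) ^ 2) P ∧
      ∫ ω, (∑ n ∈ Finset.Ioc c d, b n * X n ω) ^ 2 ∂P ≤ ∑ n ∈ Finset.Ioc c d, b n ^ 2 :=
    fun c d => quasi_orth hb hmeas hnorm hneg (Finset.Ioc c d) (hIoc c d)
  have hint : Integrable (fun ω => ∑ j ∈ Finset.range (m + 1), ∑ i ∈ Finset.range (2 ^ (m - j)),
      (∑ n ∈ Finset.Ioc (a + i * 2 ^ j) (a + i * 2 ^ j + 2 ^ j), b n * X n ω) ^ 2) P :=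
    integrable_finset_sum _ fun j _ => integrable_finset_sum _ fun i _ => (hq _ _).1
  refine ⟨hint, ?_⟩
  rw [integral_finset_sum _ fun j _ => integrable_finset_sum _ fun i _ => (hq _ _).1]
  have hstep : ∀ j ∈ Finset.range (m + 1),
      ∫ ω, (∑ i ∈ Finset.range (2 ^ (m - j)),
          (∑ n ∈ Finset.Ioc (a + i * 2 ^ j) (a + i * 2 ^ j + 2 ^ j), b n * X n ω) ^ 2) ∂P
        ≤ ∑ n ∈ Finset.Ioc a (a + 2 ^ m), b n ^ 2 := by
    intro j hjr
    rw [Finset.mem_range] at hjr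
    rw [integral_finset_sum _ fun i _ => (hq _ _).1]
    have h1 : ∑ i ∈ Finset.range (2 ^ (m - j)),
        ∫ ω, (∑ n ∈ Finset.Ioc (a + i * 2 ^ j) (a + i * 2 ^ j + 2 ^ j), b n * X n ω) ^ 2 ∂P
        ≤ ∑ i ∈ Finset.range (2 ^ (m - j)),
          ∑ n ∈ Finset.Ioc (a + i * 2 ^ j) (a + i * 2 ^ j + 2 ^ j), b n ^ 2 :=
      Finset.sum_le_sum fun i _ => (hq _ _).2
    have h2 : ∑ i ∈ Finset.range (2 ^ (m - j)),
        ∑ n ∈ Finset.Ioc (a + i * 2 ^ j) (a + i * 2 ^ j + 2 ^ j), (b n) ^ 2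
        = ∑ n ∈ Finset.Ioc a (a + 2 ^ m), b n ^ 2 := by
      have h3 := sum_blocks_Ioc (fun n => b n ^ 2) a (2 ^ j) (2 ^ (m - j))
      have h4 : 2 ^ (m - j) * 2 ^ j = 2 ^ m := by
        rw [← pow_add]
        congr 1
        omega
      rw [h3, h4]
    linarith
  calc ∑ j ∈ Finset.range (m + 1), ∫ ω, (∑ i ∈ Finset.range (2 ^ (m - j)),
          (∑ n ∈ Finset.Ioc (a + i * 2 ^ j) (a + i * 2 ^ j + 2 ^ j), b n * X n ω) ^ 2) ∂P
      ≤ ∑ _j ∈ Finset.range (m + 1), ∑ n ∈ Finset.Ioc a (a + 2 ^ m), b n ^ 2 :=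
        Finset.sum_le_sum hstep
    _ = ((m : ℝ) + 1) * ∑ n ∈ Finset.Ioc a (a + 2 ^ m), b n ^ 2 := by
        rw [Finset.sum_const, Finset.card_range, nsmul_eq_mul]
        push_cast
        ring
lemma dyadic_union (f : ℕ → ℝ) (Q : ℕ) :
    ∑ p ∈ Finset.range Q, ∑ n ∈ Finset.Ioc (2 ^ p) (2 ^ (p + 1)), f n
      = ∑ n ∈ Finset.Ioc 1 (2 ^ Q), f n := by
  induction Q with
  | zero => simp
  | succ Q ih =>
    rw [Finset.sum_range_succ, ih]
    exact Finset.sum_Ioc_consecutive f Nat.one_le_two_pow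
      (Nat.pow_le_pow_right (by norm_num) (Nat.le_succ Q))

lemma logb_ge_of_block {p n : ℕ} (hn : 2 ^ p < n) : (p : ℝ) + 1 ≤ 2 * Real.logb 2 ((n : ℝ) + 1) := by
  have h2 : (2 : ℕ) ^ p ≤ n := le_of_lt hn
  have hcast : ((2 : ℝ) ^ p) ≤ (n : ℝ) := by exact_mod_cast h2
  have hp : (p : ℝ) ≤ Real.logb 2 ((n : ℝ) + 1) := by
    have h3 : Real.logb 2 ((2 : ℝ) ^ p) ≤ Real.logb 2 ((n : ℝ) + 1) :=
      Real.logb_le_logb_of_le one_lt_two (by positivity) (by linarith)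
    rwa [Real.logb_pow, Real.logb_self_eq_one (by norm_num : (1:ℝ) < 2), mul_one] at h3
  have h1 : (1 : ℝ) ≤ Real.logb 2 ((n : ℝ) + 1) := by
    have hn2 : (2 : ℝ) ≤ (n : ℝ) + 1 := by
      have : 1 ≤ n := by calc 1 ≤ 2 ^ p := Nat.one_le_two_pow
                             _ ≤ n := h2
      have : (1 : ℝ) ≤ (n : ℝ) := by exact_mod_cast this
      linarith
    have h3 : Real.logb 2 (2 : ℝ) ≤ Real.logb 2 ((n : ℝ) + 1) :=
      Real.logb_le_logb_of_le one_lt_two (by norm_num) hn2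
    rwa [Real.logb_self_eq_one (by norm_num : (1:ℝ) < 2)] at h3
  linarith

lemma weight_summable {b : ℕ → ℝ}
    (hbsum : Summable fun n : ℕ => b n ^ 2 * Real.logb 2 ((n : ℝ) + 1) ^ 2) :
    Summable fun p : ℕ => ((p : ℝ) + 1) ^ 2 * ∑ n ∈ Finset.Ioc (2 ^ p) (2 ^ (p + 1)), b n ^ 2 := by
  have hnn : ∀ n : ℕ, 0 ≤ b n ^ 2 * Real.logb 2 ((n : ℝ) + 1) ^ 2 := fun n => by positivity
  apply summable_of_sum_range_le (c := 4 * ∑' n, b n ^ 2 * Real.logb 2 ((n : ℝ) + 1) ^ 2)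
  · intro p
    exact mul_nonneg (by positivity) (Finset.sum_nonneg fun n _ => sq_nonneg _)
  · intro Q
    have step1 : ∀ p ∈ Finset.range Q,
        ((p : ℝ) + 1) ^ 2 * ∑ n ∈ Finset.Ioc (2 ^ p) (2 ^ (p + 1)), b n ^ 2
          ≤ ∑ n ∈ Finset.Ioc (2 ^ p) (2 ^ (p + 1)),
              4 * (b n ^ 2 * Real.logb 2 ((n : ℝ) + 1) ^ 2) := by
      intro p _
      rw [Finset.mul_sum]
      apply Finset.sum_le_sum
      intro n hn
      have hblock := (Finset.mem_Ioc.mp hn).1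
      have hkey := logb_ge_of_block hblock
      have hlnn : 0 ≤ Real.logb 2 ((n : ℝ) + 1) := by
        have : (0 : ℝ) ≤ (p : ℝ) + 1 := by positivity
        linarith
      have hsq : ((p : ℝ) + 1) ^ 2 ≤ 4 * Real.logb 2 ((n : ℝ) + 1) ^ 2 := by
        nlinarith [hkey, hlnn]
      calc ((p : ℝ) + 1) ^ 2 * b n ^ 2
          ≤ (4 * Real.logb 2 ((n : ℝ) + 1) ^ 2) * b n ^ 2 :=
            mul_le_mul_of_nonneg_right hsq (sq_nonneg _)
        _ = 4 * (b n ^ 2 * Real.logb 2 ((n : ℝ) + 1) ^ 2) := by ring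
    calc ∑ p ∈ Finset.range Q, ((p : ℝ) + 1) ^ 2 * ∑ n ∈ Finset.Ioc (2 ^ p) (2 ^ (p + 1)), b n ^ 2
        ≤ ∑ p ∈ Finset.range Q, ∑ n ∈ Finset.Ioc (2 ^ p) (2 ^ (p + 1)),
            4 * (b n ^ 2 * Real.logb 2 ((n : ℝ) + 1) ^ 2) := Finset.sum_le_sum step1
      _ = ∑ n ∈ Finset.Ioc 1 (2 ^ Q), 4 * (b n ^ 2 * Real.logb 2 ((n : ℝ) + 1) ^ 2) :=
          dyadic_union _ Q
      _ = 4 * ∑ n ∈ Finset.Ioc 1 (2 ^ Q), b n ^ 2 * Real.logb 2 ((n : ℝ) + 1) ^ 2 := by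
          rw [Finset.mul_sum]
      _ ≤ 4 * ∑' n, b n ^ 2 * Real.logb 2 ((n : ℝ) + 1) ^ 2 := by
          have := hbsum.sum_le_tsum (Finset.Ioc 1 (2 ^ Q)) (fun n _ => hnn n)
          linarith

lemma sqrt_block_summable {s : ℕ → ℝ} (hs : ∀ p, 0 ≤ s p)
    (hsq : Summable fun p : ℕ => ((p : ℝ) + 1) ^ 2 * s p) :
    Summable fun p => Real.sqrt (s p) := by
  have hinv : Summable fun p : ℕ => (1 / ((p : ℝ) + 1)) ^ 2 := by
    have h2 : Summable fun n : ℕ => 1 / ((n : ℝ) + 1) ^ 2 := by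
      have h3 := (summable_nat_add_iff 1).2 ((Real.summable_one_div_nat_pow (p := 2)).2 one_lt_two)
      apply h3.congr
      intro n
      push_cast
      ring
    apply h2.congr
    intro n
    rw [div_pow, one_pow]
  have hle : ∀ p : ℕ, Real.sqrt (s p)
      ≤ (((p : ℝ) + 1) ^ 2 * s p + (1 / ((p : ℝ) + 1)) ^ 2) / 2 := by
    intro p
    set A := Real.sqrt (((p : ℝ) + 1) ^ 2 * s p) with hA
    have hA0 : 0 ≤ A := Real.sqrt_nonneg _
    have hA2 : A ^ 2 = ((p : ℝ) + 1) ^ 2 * s p := Real.sq_sqrt (mul_nonneg (by positivity) (hs p))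
    have hrw : Real.sqrt (s p) = A * (1 / ((p : ℝ) + 1)) := by
      rw [hA, Real.sqrt_mul (by positivity : (0:ℝ) ≤ ((p : ℝ) + 1) ^ 2), Real.sqrt_sq (by positivity : (0:ℝ) ≤ (p : ℝ) + 1)]
      field_simp
    rw [hrw]
    nlinarith [sq_nonneg (A - 1 / ((p : ℝ) + 1))]
  exact Summable.of_nonneg_of_le (fun p => Real.sqrt_nonneg _) hle ((hsq.add hinv).div_const 2)
set_option maxHeartbeats 1000000 in
lemma real_series_converges {Ω : Type*} [MeasurableSpace Ω] (P : Measure Ω)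
    [IsProbabilityMeasure P] (b : ℕ → ℝ) (X : ℕ → Ω → ℝ) (hb : ∀ n, 0 ≤ b n)
    (hmeas : ∀ n, 1 ≤ n → AEMeasurable (X n) P)
    (hnorm : ∀ n, 1 ≤ n → ∫ ω, X n ω ^ 2 ∂P = 1)
    (hneg : ∀ n m, 1 ≤ n → 1 ≤ m → n ≠ m → ∫ ω, X n ω * X m ω ∂P ≤ 0)
    (hbsum : Summable fun n : ℕ => b n ^ 2 * Real.logb 2 ((n : ℝ) + 1) ^ 2) :
    ∀ᵐ ω ∂P, ∃ l : ℝ,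
      Tendsto (fun N => ∑ n ∈ Finset.Icc 1 N, b n * X n ω) atTop (nhds l) := by
  have hIoc1 : ∀ c d : ℕ, ∀ n ∈ Finset.Ioc c d, 1 ≤ n := by
    intro c d n hn
    have := (Finset.mem_Ioc.mp hn).1
    omega
  have hq : ∀ c d : ℕ, Integrable (fun ω => (∑ n ∈ Finset.Ioc c d, b n * X n ω) ^ 2) P ∧
      ∫ ω, (∑ n ∈ Finset.Ioc c d, b n * X n ω) ^ 2 ∂P ≤ ∑ n ∈ Finset.Ioc c d, b n ^ 2 :=
    fun c d => quasi_orth hb hmeas hnorm hneg (Finset.Ioc c d) (hIoc1 c d)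
  have hblockmeas : ∀ c d : ℕ, AEMeasurable (fun ω => ∑ n ∈ Finset.Ioc c d, b n * X n ω) P :=
    fun c d => Finset.aemeasurable_fun_sum _ fun n hn => (hmeas n (hIoc1 c d n hn)).const_mul _
  have hblockint : ∀ c d : ℕ, Integrable (fun ω => ∑ n ∈ Finset.Ioc c d, b n * X n ω) P := by
    intro c d
    have hg : Integrable (fun ω => ((∑ n ∈ Finset.Ioc c d, b n * X n ω) ^ 2 + 1) / 2) P :=
      ((hq c d).1.add (integrable_const 1)).div_const 2
    apply Integrable.mono' hg (hblockmeas c d).aestronglyMeasurable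
    filter_upwards with ω
    have h1 : ‖∑ n ∈ Finset.Ioc c d, b n * X n ω‖ = |∑ n ∈ Finset.Ioc c d, b n * X n ω| := rfl
    rw [h1]
    nlinarith [sq_nonneg (|∑ n ∈ Finset.Ioc c d, b n * X n ω| - 1),
      sq_abs (∑ n ∈ Finset.Ioc c d, b n * X n ω), abs_nonneg (∑ n ∈ Finset.Ioc c d, b n * X n ω)]
  -- the dyadic block increments
  set D : ℕ → Ω → ℝ := fun p ω => ∑ n ∈ Finset.Ioc (2 ^ p) (2 ^ (p + 1)), b n * X n ω with hD_def
  set s : ℕ → ℝ := fun p => ∑ n ∈ Finset.Ioc (2 ^ p) (2 ^ (p + 1)), b n ^ 2 with hs_def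
  have hs0 : ∀ p, 0 ≤ s p := fun p => Finset.sum_nonneg fun n _ => sq_nonneg _
  have hwsum : Summable fun p : ℕ => ((p : ℝ) + 1) ^ 2 * s p := weight_summable hbsum
  have hsqrt : Summable fun p => Real.sqrt (s p) := sqrt_block_summable hs0 hwsum
  -- a.s. absolute convergence of the subsequence increments
  have hDabs_int : ∀ p, Integrable (fun ω => |D p ω|) P := fun p => (hblockint _ _).abs
  have hDabs_bound : ∀ p, ∫ ω, |D p ω| ∂P ≤ Real.sqrt (s p) := by
    intro p
    have h1 := abs_integral_le_sqrt P (hblockmeas (2 ^ p) (2 ^ (p + 1))).aestronglyMeasurable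
      (hq (2 ^ p) (2 ^ (p + 1))).1
    exact h1.trans (Real.sqrt_le_sqrt (hq (2 ^ p) (2 ^ (p + 1))).2)
  have hAE1 : ∀ᵐ ω ∂P, Summable fun p => |D p ω| := by
    apply ae_summable_of_summable_integral (fun p => (hDabs_int p).aemeasurable)
      (fun p ω => abs_nonneg _) hDabs_int
    exact Summable.of_nonneg_of_le (fun p => integral_nonneg fun ω => abs_nonneg _)
      hDabs_bound hsqrt
  -- the maximal-function majorants G p
  set G : ℕ → Ω → ℝ := fun p ω => ((p : ℝ) + 1) *
      ∑ j ∈ Finset.range (p + 1), ∑ i ∈ Finset.range (2 ^ (p - j)),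
        (∑ n ∈ Finset.Ioc (2 ^ p + i * 2 ^ j) (2 ^ p + i * 2 ^ j + 2 ^ j), b n * X n ω) ^ 2
    with hG_def
  have hGmeas : ∀ p, AEMeasurable (G p) P := by
    intro p
    apply AEMeasurable.const_mul
    exact Finset.aemeasurable_fun_sum _ fun j _ => Finset.aemeasurable_fun_sum _ fun i _ =>
      (hblockmeas _ _).pow_const 2
  have hGnn : ∀ p ω, 0 ≤ G p ω := by
    intro p ω
    apply mul_nonneg (by positivity)
    exact Finset.sum_nonneg fun j _ => Finset.sum_nonneg fun i _ => sq_nonneg _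
  have hGint : ∀ p, Integrable (G p) P := by
    intro p
    exact ((F_bound hb hmeas hnorm hneg p (2 ^ p)).1.const_mul _)
  have hGbound : ∀ p, ∫ ω, G p ω ∂P ≤ ((p : ℝ) + 1) ^ 2 * s p := by
    intro p
    have h2p : 2 ^ p + 2 ^ p = 2 ^ (p + 1) := by rw [pow_succ]; ring
    have h1 := (F_bound hb hmeas hnorm hneg p (2 ^ p)).2
    rw [h2p] at h1
    have h2 : ∫ ω, G p ω ∂P = ((p : ℝ) + 1) *
        ∫ ω, (∑ j ∈ Finset.range (p + 1), ∑ i ∈ Finset.range (2 ^ (p - j)),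
          (∑ n ∈ Finset.Ioc (2 ^ p + i * 2 ^ j) (2 ^ p + i * 2 ^ j + 2 ^ j), b n * X n ω) ^ 2) ∂P :=
      MeasureTheory.integral_const_mul _ _
    rw [h2, hs_def]
    calc ((p : ℝ) + 1) * ∫ ω, (∑ j ∈ Finset.range (p + 1), ∑ i ∈ Finset.range (2 ^ (p - j)),
          (∑ n ∈ Finset.Ioc (2 ^ p + i * 2 ^ j) (2 ^ p + i * 2 ^ j + 2 ^ j), b n * X n ω) ^ 2) ∂P
        ≤ ((p : ℝ) + 1) * (((p : ℝ) + 1) * ∑ n ∈ Finset.Ioc (2 ^ p) (2 ^ (p + 1)), b n ^ 2) :=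
          mul_le_mul_of_nonneg_left h1 (by positivity)
      _ = ((p : ℝ) + 1) ^ 2 * ∑ n ∈ Finset.Ioc (2 ^ p) (2 ^ (p + 1)), b n ^ 2 := by ring
  have hAE2 : ∀ᵐ ω ∂P, Summable fun p => G p ω := by
    apply ae_summable_of_summable_integral hGmeas hGnn hGint
    exact Summable.of_nonneg_of_le (fun p => integral_nonneg (hGnn p)) hGbound hwsum
  -- combine
  filter_upwards [hAE1, hAE2] with ω h1 h2
  have hIcc : ∀ k : ℕ, Finset.Icc 1 k = Finset.Ioc 0 k := fun k => Finset.Icc_add_one_left_eq_Ioc 0 k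
  have hDsum : Summable fun p => D p ω := Summable.of_abs h1
  have htend2 : Tendsto (fun q => ∑ p ∈ Finset.range q, D p ω) atTop (nhds (∑' p, D p ω)) :=
    hDsum.hasSum.tendsto_sum_nat
  have htel : ∀ q : ℕ, ∑ n ∈ Finset.Ioc 0 (2 ^ q), b n * X n ω
      = (∑ n ∈ Finset.Ioc 0 1, b n * X n ω) + ∑ p ∈ Finset.range q, D p ω := by
    intro q
    induction q with
    | zero => simp [show Finset.Ioc 0 1 = ({1} : Finset ℕ) from rfl]
    | succ q ih =>
      rw [Finset.sum_range_succ, ← add_assoc, ← ih, hD_def]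
      exact (Finset.sum_Ioc_consecutive _ (Nat.zero_le _)
        (Nat.pow_le_pow_right (by norm_num) (Nat.le_succ q))).symm
  set L : ℝ := (∑ n ∈ Finset.Ioc 0 1, b n * X n ω) + ∑' p, D p ω with hL_def
  have htendS : Tendsto (fun q => ∑ n ∈ Finset.Ioc 0 (2 ^ q), b n * X n ω) atTop (nhds L) := by
    rw [hL_def]
    exact Tendsto.congr (fun q => (htel q).symm) (tendsto_const_nhds.add htend2)
  have hGtend : Tendsto (fun p => G p ω) atTop (nhds 0) := h2.tendsto_atTop_zero
  refine ⟨L, ?_⟩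
  have hgoal : Tendsto (fun N => ∑ n ∈ Finset.Ioc 0 N, b n * X n ω) atTop (nhds L) := by
    rw [Metric.tendsto_atTop]
    intro ε hε
    have hε2 : 0 < ε / 2 := by linarith
    rw [Metric.tendsto_atTop] at htendS
    obtain ⟨p₁, hp₁⟩ := htendS (ε / 2) hε2
    have hG2 : ∀ᶠ p in atTop, G p ω < (ε / 2) ^ 2 :=
      (hGtend.eventually_lt_const (by positivity))
    obtain ⟨p₂, hp₂⟩ := eventually_atTop.mp hG2
    refine ⟨2 ^ (max p₁ p₂) + 1, ?_⟩
    intro N hN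
    set p₀ := max p₁ p₂ with hp₀_def
    have hN1 : 2 ^ p₀ ≤ N - 1 := by omega
    have hNpos : 1 ≤ N := by
      have := Nat.one_le_two_pow (n := p₀)
      omega
    set p := Nat.log 2 (N - 1) with hp_def
    have hp₀p : p₀ ≤ p := by
      calc p₀ = Nat.log 2 (2 ^ p₀) := (Nat.log_pow (by norm_num) p₀).symm
        _ ≤ Nat.log 2 (N - 1) := Nat.log_mono_right hN1
    have hlow : 2 ^ p ≤ N - 1 := Nat.pow_log_le_self 2 (by
      have := Nat.one_le_two_pow (n := p₀)
      omega)
    have hup : N - 1 < 2 ^ (p + 1) := Nat.lt_pow_succ_log_self (by norm_num) _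
    have hlow' : 2 ^ p < N := by omega
    have hup' : N ≤ 2 ^ p + 2 ^ p := by
      have h2p : 2 ^ p + 2 ^ p = 2 ^ (p + 1) := by rw [pow_succ]; ring
      omega
    -- the dyadic square-function bound
    have hbd := dyadic_sq_bound (fun n => b n * X n ω) p (2 ^ p) N hlow' hup'
    have hbdG : (∑ n ∈ Finset.Ioc (2 ^ p) N, b n * X n ω) ^ 2 ≤ G p ω := hbd
    have hGsmall : G p ω < (ε / 2) ^ 2 := hp₂ p (le_trans (le_max_right p₁ p₂) hp₀p)
    have habs : |∑ n ∈ Finset.Ioc (2 ^ p) N, b n * X n ω| < ε / 2 := by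
      have hs1 : (∑ n ∈ Finset.Ioc (2 ^ p) N, b n * X n ω) ^ 2 < (ε / 2) ^ 2 :=
        lt_of_le_of_lt hbdG hGsmall
      have := Real.sqrt_lt_sqrt (sq_nonneg _) hs1
      rwa [Real.sqrt_sq_eq_abs, Real.sqrt_sq (le_of_lt hε2)] at this
    have hSp : dist (∑ n ∈ Finset.Ioc 0 (2 ^ p), b n * X n ω) L < ε / 2 :=
      hp₁ p (le_trans (le_max_left p₁ p₂) hp₀p)
    have hsplit : ∑ n ∈ Finset.Ioc 0 N, b n * X n ω
        = (∑ n ∈ Finset.Ioc 0 (2 ^ p), b n * X n ω) + ∑ n ∈ Finset.Ioc (2 ^ p) N, b n * X n ω :=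
      (Finset.sum_Ioc_consecutive _ (Nat.zero_le _) (le_of_lt hlow')).symm
    rw [Real.dist_eq] at hSp ⊢
    rw [hsplit]
    calc |∑ n ∈ Finset.Ioc 0 (2 ^ p), b n * X n ω + ∑ n ∈ Finset.Ioc (2 ^ p) N, b n * X n ω - L|
        = |(∑ n ∈ Finset.Ioc 0 (2 ^ p), b n * X n ω - L)
            + ∑ n ∈ Finset.Ioc (2 ^ p) N, b n * X n ω| := by ring_nf
      _ ≤ |∑ n ∈ Finset.Ioc 0 (2 ^ p), b n * X n ω - L|
            + |∑ n ∈ Finset.Ioc (2 ^ p) N, b n * X n ω| := abs_add_le _ _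
      _ < ε / 2 + ε / 2 := add_lt_add hSp habs
      _ = ε := by ring
  have hfun : (fun N => ∑ n ∈ Finset.Icc 1 N, b n * X n ω)
      = fun N => ∑ n ∈ Finset.Ioc 0 N, b n * X n ω := by
    funext N
    rw [hIcc N]
  rw [hfun]
  exact hgoal
/-- For negatively correlated real random variables with unit second moment, the
Menshov–Rademacher condition `Σ |a_n|² log₂²(n+1) < ∞` implies that `Σ a_n X_n`
converges almost surely. -/
theorem negatively_correlated_series_converges
    {Ω : Type*} [MeasurableSpace Ω] (P : Measure Ω) [IsProbabilityMeasure P]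
    (a : ℕ → ℂ) (X : ℕ → Ω → ℝ)
    (hmeas : ∀ n, 1 ≤ n → AEMeasurable (X n) P)
    (hnorm : ∀ n, 1 ≤ n → ∫ ω, (X n ω) ^ 2 ∂P = 1)
    (hneg : ∀ n m, 1 ≤ n → 1 ≤ m → n ≠ m → ∫ ω, X n ω * X m ω ∂P ≤ 0)
    (hsum : Summable (fun n : ℕ+ => ‖a n‖ ^ 2 * (Real.logb 2 ((n : ℕ) + 1)) ^ 2)) :
    ∀ᵐ ω ∂P, ∃ l : ℂ,
      Tendsto (fun N => ∑ n ∈ Finset.Icc 1 N, a n * (X n ω : ℂ)) atTop (nhds l) := by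
  -- transfer summability to ℕ
  have hsum1 : Summable fun n : ℕ => ‖a (n + 1)‖ ^ 2 * Real.logb 2 ((n : ℝ) + 1 + 1) ^ 2 := by
    have h := (Equiv.pnatEquivNat.symm.summable_iff
      (f := fun n : ℕ+ => ‖a n‖ ^ 2 * (Real.logb 2 ((n : ℕ) + 1)) ^ 2)).2 hsum
    apply h.congr
    intro n
    have h2 : ((Equiv.pnatEquivNat.symm n : ℕ+) : ℕ) = n + 1 := rfl
    simp only [Function.comp_apply, h2]
    push_cast
    ring_nf
  have hsumN : Summable fun n : ℕ => ‖a n‖ ^ 2 * Real.logb 2 ((n : ℝ) + 1) ^ 2 := by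
    apply (summable_nat_add_iff 1).1
    apply hsum1.congr
    intro n
    push_cast
    ring_nf
  -- the four nonnegative coefficient sequences
  set b1 : ℕ → ℝ := fun n => max ((a n).re) 0 with hb1
  set b2 : ℕ → ℝ := fun n => max (-(a n).re) 0 with hb2
  set b3 : ℕ → ℝ := fun n => max ((a n).im) 0 with hb3
  set b4 : ℕ → ℝ := fun n => max (-(a n).im) 0 with hb4
  have hble : ∀ (b : ℕ → ℝ), (∀ n, 0 ≤ b n) → (∀ n, b n ≤ ‖a n‖) →
      Summable fun n : ℕ => b n ^ 2 * Real.logb 2 ((n : ℝ) + 1) ^ 2 := by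
    intro b h0 hle
    apply Summable.of_nonneg_of_le (fun n => by positivity) _ hsumN
    intro n
    apply mul_le_mul_of_nonneg_right _ (sq_nonneg _)
    exact pow_le_pow_left₀ (h0 n) (hle n) 2
  have habs : ∀ n, |(a n).re| ≤ ‖a n‖ := fun n => Complex.abs_re_le_norm (a n)
  have habsi : ∀ n, |(a n).im| ≤ ‖a n‖ := fun n => Complex.abs_im_le_norm (a n)
  have h1s := hble b1 (fun n => le_max_right _ _)
    (fun n => max_le ((le_abs_self _).trans (habs n)) (norm_nonneg _))
  have h2s := hble b2 (fun n => le_max_right _ _)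
    (fun n => max_le ((neg_le_abs _).trans (habs n)) (norm_nonneg _))
  have h3s := hble b3 (fun n => le_max_right _ _)
    (fun n => max_le ((le_abs_self _).trans (habsi n)) (norm_nonneg _))
  have h4s := hble b4 (fun n => le_max_right _ _)
    (fun n => max_le ((neg_le_abs _).trans (habsi n)) (norm_nonneg _))
  have hae1 := real_series_converges P b1 X (fun n => le_max_right _ _) hmeas hnorm hneg h1s
  have hae2 := real_series_converges P b2 X (fun n => le_max_right _ _) hmeas hnorm hneg h2s
  have hae3 := real_series_converges P b3 X (fun n => le_max_right _ _) hmeas hnorm hneg h3s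
  have hae4 := real_series_converges P b4 X (fun n => le_max_right _ _) hmeas hnorm hneg h4s
  filter_upwards [hae1, hae2, hae3, hae4] with ω ⟨l1, hl1⟩ ⟨l2, hl2⟩ ⟨l3, hl3⟩ ⟨l4, hl4⟩
  refine ⟨(↑l1 - ↑l2) + (↑l3 - ↑l4) * Complex.I, ?_⟩
  have hterm : ∀ n : ℕ, a n * (X n ω : ℂ)
      = ((b1 n * X n ω : ℝ) : ℂ) - ((b2 n * X n ω : ℝ) : ℂ)
        + (((b3 n * X n ω : ℝ) : ℂ) - ((b4 n * X n ω : ℝ) : ℂ)) * Complex.I := by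
    intro n
    have hre : b1 n - b2 n = (a n).re := max_zero_sub_max_neg_zero_eq_self _
    have him : b3 n - b4 n = (a n).im := max_zero_sub_max_neg_zero_eq_self _
    have hz : a n = ((a n).re : ℂ) + ((a n).im : ℝ) * Complex.I := (Complex.re_add_im (a n)).symm
    rw [hz, ← hre, ← him]
    push_cast
    ring
  have hsum_eq : ∀ N : ℕ, ∑ n ∈ Finset.Icc 1 N, a n * (X n ω : ℂ)
      = ((∑ n ∈ Finset.Icc 1 N, b1 n * X n ω : ℝ) : ℂ)
          - ((∑ n ∈ Finset.Icc 1 N, b2 n * X n ω : ℝ) : ℂ)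
        + (((∑ n ∈ Finset.Icc 1 N, b3 n * X n ω : ℝ) : ℂ)
          - ((∑ n ∈ Finset.Icc 1 N, b4 n * X n ω : ℝ) : ℂ)) * Complex.I := by
    intro N
    rw [Finset.sum_congr rfl fun n _ => hterm n]
    push_cast
    rw [Finset.sum_add_distrib, Finset.sum_sub_distrib, ← Finset.sum_mul, Finset.sum_sub_distrib]
  have htends : Tendsto (fun N => ((∑ n ∈ Finset.Icc 1 N, b1 n * X n ω : ℝ) : ℂ)
      - ((∑ n ∈ Finset.Icc 1 N, b2 n * X n ω : ℝ) : ℂ)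
      + (((∑ n ∈ Finset.Icc 1 N, b3 n * X n ω : ℝ) : ℂ)
      - ((∑ n ∈ Finset.Icc 1 N, b4 n * X n ω : ℝ) : ℂ)) * Complex.I) atTop
      (nhds ((↑l1 - ↑l2) + (↑l3 - ↑l4) * Complex.I)) := by
    have t1 := (Complex.continuous_ofReal.tendsto l1).comp hl1
    have t2 := (Complex.continuous_ofReal.tendsto l2).comp hl2
    have t3 := (Complex.continuous_ofReal.tendsto l3).comp hl3
    have t4 := (Complex.continuous_ofReal.tendsto l4).comp hl4
    exact (t1.sub t2).add ((t3.sub t4).mul_const Complex.I)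
  exact Tendsto.congr (fun N => (hsum_eq N).symm) htends
end

section
/- Let (X_n)_{n≥1} be a sequence of real-valued random variables with E(X_n²) = 1 for all n and E(X_n X_m) ≤ 0 for all n ≠ m, and let (c_n)_{n≥1} be a sequence of nonnegative real numbers with Σ_{n=1}^∞ c_n² < ∞. Then Σ_{n,m=1}^∞ c_n c_m |E(X_n X_m)| ≤ 2 Σ_{n=1}^∞ c_n². -/
open MeasureTheory Filter
open scoped ENNReal

/-- For negatively correlated real random variables with unit second moment and a
nonnegative square-summable sequence `(c_n)`,
`Σ_{n,m≥1} c_n c_m |E(X_n X_m)| ≤ 2 Σ_{n≥1} c_n²`. -/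
theorem negatively_correlated_double_sum_bound
    {Ω : Type*} [MeasurableSpace Ω] (P : Measure Ω) [IsProbabilityMeasure P]
    (X : ℕ → Ω → ℝ) (c : ℕ → ℝ)
    (hmeas : ∀ n, 1 ≤ n → AEMeasurable (X n) P)
    (hnorm : ∀ n, 1 ≤ n → ∫ ω, (X n ω) ^ 2 ∂P = 1)
    (hneg : ∀ n m, 1 ≤ n → 1 ≤ m → n ≠ m → ∫ ω, X n ω * X m ω ∂P ≤ 0)
    (hc : ∀ n, 1 ≤ n → 0 ≤ c n)
    (hsum : Summable (fun n : ℕ+ => (c n) ^ 2)) :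
    ∑' (n : ℕ+) (m : ℕ+),
        ENNReal.ofReal (c n * c m * |∫ ω, X n ω * X m ω ∂P|) ≤
      2 * ∑' (n : ℕ+), ENNReal.ofReal ((c n) ^ 2) := by
  -- each X n is in L²
  have hL2 : ∀ n : ℕ+, MemLp (X n) 2 P := by
    intro n
    rw [memLp_two_iff_integrable_sq ((hmeas n n.2).aestronglyMeasurable)]
    by_contra hni
    have h := hnorm n n.2
    rw [integral_undef hni] at h
    norm_num at h
  -- products are integrable
  have hint : ∀ n m : ℕ+, Integrable (fun ω => X n ω * X m ω) P := by
    intro n m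
    have h : MemLp ((X n : Ω → ℝ) • (X m : Ω → ℝ)) 1 P :=
      haveI : ENNReal.HolderTriple 2 2 1 := ⟨by rw [ENNReal.inv_two_add_inv_two, inv_one]⟩
      (hL2 m).smul (hL2 n)
    rwa [memLp_one_iff_integrable] at h
  have hintc : ∀ n m : ℕ+, Integrable (fun ω => (c n * X n ω) * (c m * X m ω)) P := by
    intro n m
    exact ((hint n m).const_mul (c n * c m)).congr
      (Filter.Eventually.of_forall fun ω => by ring)
  set e : ℕ+ → ℕ+ → ℝ := fun n m => ∫ ω, X n ω * X m ω ∂P with he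
  have hediag : ∀ n : ℕ+, e n n = 1 := by
    intro n
    have h := hnorm n n.2
    rw [he]
    simp only
    rw [← h]
    congr 1
    ext ω
    ring
  -- key finite-sum inequality
  have key : ∀ F : Finset ℕ+,
      ∑ n ∈ F, ∑ m ∈ F, c n * c m * |e n m| ≤ 2 * ∑ n ∈ F, (c n) ^ 2 := by
    intro F
    have h1 : ∫ ω, (∑ n ∈ F, c n * X n ω) ^ 2 ∂P = ∑ n ∈ F, ∑ m ∈ F, c n * c m * e n m := by
      have hpt : ∀ ω, (∑ n ∈ F, c n * X n ω) ^ 2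
          = ∑ n ∈ F, ∑ m ∈ F, (c n * X n ω) * (c m * X m ω) := fun ω => by
        rw [sq, Finset.sum_mul_sum]
      simp_rw [hpt]
      rw [integral_finset_sum F (fun n _ => integrable_finset_sum F (fun m _ => hintc n m))]
      refine Finset.sum_congr rfl fun n _ => ?_
      rw [integral_finset_sum F (fun m _ => hintc n m)]
      refine Finset.sum_congr rfl fun m _ => ?_
      have : ∀ ω, (c n * X n ω) * (c m * X m ω) = (c n * c m) * (X n ω * X m ω) :=
        fun ω => by ring
      simp_rw [this]
      rw [integral_const_mul]
    have hS : 0 ≤ ∑ n ∈ F, ∑ m ∈ F, c n * c m * e n m := by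
      rw [← h1]
      exact integral_nonneg fun ω => sq_nonneg _
    have hterm : ∀ n ∈ F, ∀ m ∈ F,
        c n * c m * |e n m| = (if n = m then 2 * (c n) ^ 2 else 0) - c n * c m * e n m := by
      intro n _ m _
      by_cases h : n = m
      · subst h
        rw [hediag n, abs_one, if_pos rfl]
        ring
      · have hle : e n m ≤ 0 :=
          hneg n m n.2 m.2 (fun hnm => h (PNat.coe_injective hnm))
        rw [abs_of_nonpos hle, if_neg h]
        ring
    calc ∑ n ∈ F, ∑ m ∈ F, c n * c m * |e n m|
        = ∑ n ∈ F, ∑ m ∈ F, ((if n = m then 2 * (c n) ^ 2 else 0) - c n * c m * e n m) := by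
          refine Finset.sum_congr rfl fun n hn => Finset.sum_congr rfl fun m hm => ?_
          exact hterm n hn m hm
      _ = (∑ n ∈ F, ∑ m ∈ F, (if n = m then 2 * (c n) ^ 2 else 0))
            - ∑ n ∈ F, ∑ m ∈ F, c n * c m * e n m := by
          rw [← Finset.sum_sub_distrib]
          exact Finset.sum_congr rfl fun n _ => Finset.sum_sub_distrib _ _
      _ ≤ ∑ n ∈ F, ∑ m ∈ F, (if n = m then 2 * (c n) ^ 2 else 0) := by linarith
      _ = ∑ n ∈ F, 2 * (c n) ^ 2 := by
          refine Finset.sum_congr rfl fun n hn => ?_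
          rw [Finset.sum_ite_eq F n (fun _ => 2 * (c n) ^ 2), if_pos hn]
      _ = 2 * ∑ n ∈ F, (c n) ^ 2 := by rw [Finset.mul_sum]
  -- assemble in ℝ≥0∞
  rw [← ENNReal.tsum_prod, ENNReal.tsum_eq_iSup_sum]
  refine iSup_le fun S => ?_
  set F := S.image Prod.fst ∪ S.image Prod.snd with hF
  have hsub : S ⊆ F ×ˢ F := fun p hp => Finset.mem_product.2
    ⟨Finset.mem_union_left _ (Finset.mem_image_of_mem _ hp),
     Finset.mem_union_right _ (Finset.mem_image_of_mem _ hp)⟩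
  have hnn : ∀ n m : ℕ+, 0 ≤ c n * c m * |e n m| := fun n m =>
    mul_nonneg (mul_nonneg (hc n n.2) (hc m m.2)) (abs_nonneg _)
  calc ∑ p ∈ S, ENNReal.ofReal (c p.1 * c p.2 * |∫ ω, X p.1 ω * X p.2 ω ∂P|)
      ≤ ∑ p ∈ F ×ˢ F, ENNReal.ofReal (c p.1 * c p.2 * |∫ ω, X p.1 ω * X p.2 ω ∂P|) :=
        Finset.sum_le_sum_of_subset hsub
    _ = ∑ n ∈ F, ∑ m ∈ F, ENNReal.ofReal (c n * c m * |e n m|) := Finset.sum_product _ _ _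
    _ = ENNReal.ofReal (∑ n ∈ F, ∑ m ∈ F, c n * c m * |e n m|) := by
        rw [ENNReal.ofReal_sum_of_nonneg fun n _ =>
          Finset.sum_nonneg fun m _ => hnn n m]
        exact Finset.sum_congr rfl fun n _ => by
          rw [ENNReal.ofReal_sum_of_nonneg fun m _ => hnn n m]
    _ ≤ ENNReal.ofReal (2 * ∑ n ∈ F, (c n) ^ 2) := ENNReal.ofReal_le_ofReal (key F)
    _ = 2 * ∑ n ∈ F, ENNReal.ofReal ((c n) ^ 2) := by
        rw [ENNReal.ofReal_mul (by norm_num), ENNReal.ofReal_ofNat,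
          ENNReal.ofReal_sum_of_nonneg fun n _ => sq_nonneg _]
    _ ≤ 2 * ∑' (n : ℕ+), ENNReal.ofReal ((c n) ^ 2) :=
        mul_le_mul_right (ENNReal.sum_le_tsum F) 2
end

section
/- Let a ≥ 0 and b > (1−a)/2 with b ≥ 0. Then there exists a constant K > 0 such that for every square-summable sequence (x_n)_{n≥1} of nonnegative real numbers, Σ_{n≠m} |n − m|^{-a} · n^{-b} · m^{-b} · x_n · x_m ≤ K Σ_{n=1}^∞ x_n²; that is, the infinite matrix with off-diagonal entries |n−m|^{-a} n^{-b} m^{-b} (n ≠ m) and zero diagonal defines a bounded linear operator on ℓ²(ℕ). -/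
open scoped ENNReal

open Real

private lemma aux_tsum_le {α β : Type*} (f : α → ℝ≥0∞) (g : β → ℝ≥0∞)
    (e : α → β) (he : Set.InjOn e (Function.support f)) (h : ∀ a, f a ≤ g (e a)) :
    ∑' a, f a ≤ ∑' b, g b := by
  rw [← tsum_subtype_support f]
  have hinj : Function.Injective fun a : Function.support f => e ↑a := fun a1 a2 hh =>
    Subtype.ext (he a1.2 a2.2 hh)
  exact le_trans (ENNReal.tsum_le_tsum fun a => h ↑a)
    (ENNReal.tsum_comp_le_tsum_of_injective hinj g)

noncomputable def zzeta (s : ℝ) : ℝ := ∑' j : ℕ, (j : ℝ) ^ (-s)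

lemma zzeta_summable {s : ℝ} (hs : 1 < s) : Summable (fun j : ℕ => (j : ℝ) ^ (-s)) :=
  Real.summable_nat_rpow.mpr (by linarith)

lemma zzeta_nonneg (s : ℝ) : 0 ≤ zzeta s :=
  tsum_nonneg fun j => rpow_nonneg (Nat.cast_nonneg j) _

lemma zzeta_pos {s : ℝ} (hs : 1 < s) : 0 < zzeta s := by
  refine Summable.tsum_pos (zzeta_summable hs) (fun j => rpow_nonneg (Nat.cast_nonneg j) _) 1 ?_
  norm_num

lemma zen_eq {s : ℝ} (hs : 1 < s) :
    ∑' j : ℕ, ENNReal.ofReal ((j : ℝ) ^ (-s)) = ENNReal.ofReal (zzeta s) :=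
  (ENNReal.ofReal_tsum_of_nonneg (fun j => rpow_nonneg (Nat.cast_nonneg j) _)
    (zzeta_summable hs)).symm

lemma row_bound (a d t : ℝ) (ha : 0 ≤ a) (hd : 0 ≤ d) (ht : 0 ≤ t)
    (had : 1 < a + d) (n : ℕ+) :
    ∑' m : ℕ+, (if n ≠ m then
        ENNReal.ofReal (|((n:ℕ):ℝ) - ((m:ℕ):ℝ)| ^ (-a) * ((m:ℕ):ℝ) ^ (-d)) else 0)
      ≤ ENNReal.ofReal ((zzeta (a+d) + (2^d + 2^a) * zzeta (a+d+t)) * ((n:ℕ):ℝ) ^ t) := by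
  have hadt : 1 < a + d + t := by linarith
  have hN1 : (1:ℝ) ≤ ((n:ℕ):ℝ) := by exact_mod_cast n.one_le
  have hN0 : (0:ℝ) < ((n:ℕ):ℝ) := lt_of_lt_of_le one_pos hN1
  have hNt1 : (1:ℝ) ≤ ((n:ℕ):ℝ) ^ t := by
    have h := Real.rpow_le_rpow_of_exponent_le hN1 ht
    rwa [Real.rpow_zero] at h
  have hNt0 : (0:ℝ) ≤ ((n:ℕ):ℝ) ^ t := le_trans zero_le_one hNt1
  set N : ℝ := ((n:ℕ):ℝ) with hNdef
  set B : ℕ+ → ℝ≥0∞ := fun m =>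
    ENNReal.ofReal (|N - ((m:ℕ):ℝ)| ^ (-a) * ((m:ℕ):ℝ) ^ (-d)) with hB
  set F₁ : ℕ+ → ℝ≥0∞ := fun m => if (n:ℕ) < (m:ℕ) then B m else 0 with hF1
  set F₂ : ℕ+ → ℝ≥0∞ := fun m =>
    if ((m:ℕ) < (n:ℕ) ∧ (n:ℕ) ≤ 2*(m:ℕ)) then B m else 0 with hF2
  set F₃ : ℕ+ → ℝ≥0∞ := fun m =>
    if ((m:ℕ) < (n:ℕ) ∧ 2*(m:ℕ) < (n:ℕ)) then B m else 0 with hF3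
  have hsplit : ∀ m : ℕ+, (if n ≠ m then B m else 0) = F₁ m + F₂ m + F₃ m := by
    intro m
    have hne : (n ≠ m) ↔ ¬((n:ℕ) = (m:ℕ)) := by
      constructor
      · intro h hc; exact h (PNat.coe_injective hc)
      · intro h hc; exact h (congrArg _ hc)
    rw [hF1, hF2, hF3]
    simp only [hne]
    split_ifs <;> first | omega | simp
  -- region 1 : m > n
  have hR1 : ∑' m, F₁ m ≤ ENNReal.ofReal (N ^ t) * ENNReal.ofReal (zzeta (a+d)) := by
    have h := aux_tsum_le F₁
      (fun j : ℕ => ENNReal.ofReal (N ^ t) * ENNReal.ofReal ((j:ℝ) ^ (-(a+d))))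
      (fun m => (m:ℕ) - (n:ℕ)) ?_ ?_
    · calc ∑' m, F₁ m ≤ ∑' j : ℕ, ENNReal.ofReal (N^t) * ENNReal.ofReal ((j:ℝ)^(-(a+d))) := h
        _ = ENNReal.ofReal (N^t) * ∑' j : ℕ, ENNReal.ofReal ((j:ℝ)^(-(a+d))) :=
            ENNReal.tsum_mul_left
        _ = _ := by rw [zen_eq had]
    · intro m₁ hm₁ m₂ hm₂ hh
      have c₁ : (n:ℕ) < (m₁:ℕ) := by
        by_contra hc; rw [hF1] at hm₁; simp only [Function.mem_support] at hm₁
        exact hm₁ (if_neg hc)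
      have c₂ : (n:ℕ) < (m₂:ℕ) := by
        by_contra hc; rw [hF1] at hm₂; simp only [Function.mem_support] at hm₂
        exact hm₂ (if_neg hc)
      have : (m₁:ℕ) = (m₂:ℕ) := by simp only at hh; omega
      exact PNat.coe_injective this
    · intro m
      by_cases hc : (n:ℕ) < (m:ℕ)
      · rw [hF1]; simp only [if_pos hc, hB]
        have hMN : N < ((m:ℕ):ℝ) := by rw [hNdef]; exact_mod_cast hc
        have hkM : (((m:ℕ) - (n:ℕ) : ℕ):ℝ) = ((m:ℕ):ℝ) - N := by
          rw [hNdef]; push_cast [Nat.cast_sub hc.le]; ring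
        have hk0 : (0:ℝ) < (((m:ℕ) - (n:ℕ) : ℕ):ℝ) := by rw [hkM]; linarith
        rw [← ENNReal.ofReal_mul hNt0]
        apply ENNReal.ofReal_le_ofReal
        have habs : |N - ((m:ℕ):ℝ)| = (((m:ℕ) - (n:ℕ) : ℕ):ℝ) := by
          rw [hkM, abs_sub_comm, abs_of_pos]; linarith
        rw [habs]
        set k : ℝ := (((m:ℕ) - (n:ℕ) : ℕ):ℝ)
        have h1 : ((m:ℕ):ℝ)^(-d) ≤ k^(-d) :=
          Real.rpow_le_rpow_of_nonpos hk0 (by rw [hkM]; linarith) (neg_nonpos.mpr hd)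
        calc k^(-a) * ((m:ℕ):ℝ)^(-d) ≤ k^(-a) * k^(-d) :=
              mul_le_mul_of_nonneg_left h1 (rpow_nonneg hk0.le _)
          _ = k^(-(a+d)) := by rw [← Real.rpow_add hk0]; congr 1; ring
          _ ≤ N^t * k^(-(a+d)) := le_mul_of_one_le_left (rpow_nonneg hk0.le _) hNt1
      · rw [hF1]; simp only [if_neg hc]; exact zero_le
  -- region 2 : n/2 ≤ m < n
  have hR2 : ∑' m, F₂ m ≤ ENNReal.ofReal (2^d * N ^ t) * ENNReal.ofReal (zzeta (a+d+t)) := by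
    have h2dNt : (0:ℝ) ≤ 2^d * N^t := by positivity
    have h := aux_tsum_le F₂
      (fun j : ℕ => ENNReal.ofReal (2^d * N ^ t) * ENNReal.ofReal ((j:ℝ) ^ (-(a+d+t))))
      (fun m => (n:ℕ) - (m:ℕ)) ?_ ?_
    · calc ∑' m, F₂ m
          ≤ ∑' j : ℕ, ENNReal.ofReal (2^d * N^t) * ENNReal.ofReal ((j:ℝ)^(-(a+d+t))) := h
        _ = ENNReal.ofReal (2^d * N^t) * ∑' j : ℕ, ENNReal.ofReal ((j:ℝ)^(-(a+d+t))) :=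
            ENNReal.tsum_mul_left
        _ = _ := by rw [zen_eq hadt]
    · intro m₁ hm₁ m₂ hm₂ hh
      have c₁ : (m₁:ℕ) < (n:ℕ) ∧ (n:ℕ) ≤ 2*(m₁:ℕ) := by
        by_contra hc; rw [hF2] at hm₁; simp only [Function.mem_support] at hm₁
        exact hm₁ (if_neg hc)
      have c₂ : (m₂:ℕ) < (n:ℕ) ∧ (n:ℕ) ≤ 2*(m₂:ℕ) := by
        by_contra hc; rw [hF2] at hm₂; simp only [Function.mem_support] at hm₂
        exact hm₂ (if_neg hc)
      have : (m₁:ℕ) = (m₂:ℕ) := by simp only at hh; omega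
      exact PNat.coe_injective this
    · intro m
      by_cases hc : (m:ℕ) < (n:ℕ) ∧ (n:ℕ) ≤ 2*(m:ℕ)
      · rw [hF2]; simp only [if_pos hc, hB]
        have hM0 : (0:ℝ) < ((m:ℕ):ℝ) := by exact_mod_cast m.pos
        have hMN : ((m:ℕ):ℝ) < N := by rw [hNdef]; exact_mod_cast hc.1
        have hN2M : N ≤ 2*((m:ℕ):ℝ) := by rw [hNdef]; exact_mod_cast hc.2
        have hkM : (((n:ℕ) - (m:ℕ) : ℕ):ℝ) = N - ((m:ℕ):ℝ) := by
          rw [hNdef]; push_cast [Nat.cast_sub hc.1.le]; ring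
        have hk0 : (0:ℝ) < (((n:ℕ) - (m:ℕ) : ℕ):ℝ) := by rw [hkM]; linarith
        rw [← ENNReal.ofReal_mul h2dNt]
        apply ENNReal.ofReal_le_ofReal
        have habs : |N - ((m:ℕ):ℝ)| = (((n:ℕ) - (m:ℕ) : ℕ):ℝ) := by
          rw [hkM, abs_of_pos]; linarith
        rw [habs]
        set k : ℝ := (((n:ℕ) - (m:ℕ) : ℕ):ℝ) with hk
        set M : ℝ := ((m:ℕ):ℝ) with hM
        have hkN : k ≤ N := by rw [hkM]; linarith
        have stepA : k^(-a) = k^(d+t) * k^(-(a+d+t)) := by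
          rw [← Real.rpow_add hk0]; congr 1; ring
        have stepB : k^(d+t) ≤ N^(d+t) := Real.rpow_le_rpow hk0.le hkN (by linarith)
        have stepC : M^(-d) ≤ (N/2)^(-d) :=
          Real.rpow_le_rpow_of_nonpos (by linarith) (by linarith) (neg_nonpos.mpr hd)
        have stepD : (N/2)^(-d) = 2^d * N^(-d) := by
          rw [Real.div_rpow hN0.le (by norm_num : (0:ℝ) ≤ 2),
            Real.rpow_neg (by norm_num : (0:ℝ) ≤ 2), div_inv_eq_mul]
          ring
        have stepE : N^(d+t) * N^(-d) = N^t := by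
          rw [← Real.rpow_add hN0]; congr 1; ring
        calc k^(-a) * M^(-d)
            = k^(d+t) * k^(-(a+d+t)) * M^(-d) := by rw [← stepA]
          _ ≤ N^(d+t) * k^(-(a+d+t)) * (2^d * N^(-d)) := by
              apply mul_le_mul
              · exact mul_le_mul_of_nonneg_right stepB (rpow_nonneg hk0.le _)
              · exact stepC.trans_eq stepD
              · exact rpow_nonneg hM0.le _
              · positivity
          _ = 2^d * N^t * k^(-(a+d+t)) := by
              linear_combination (2^d * k^(-(a+d+t))) * stepE
      · rw [hF2]; simp only [if_neg hc]; exact zero_le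
  -- region 3 : m < n/2
  have hR3 : ∑' m, F₃ m ≤ ENNReal.ofReal (2^a * N ^ t) * ENNReal.ofReal (zzeta (a+d+t)) := by
    have h2aNt : (0:ℝ) ≤ 2^a * N^t := by positivity
    have h := aux_tsum_le F₃
      (fun j : ℕ => ENNReal.ofReal (2^a * N ^ t) * ENNReal.ofReal ((j:ℝ) ^ (-(a+d+t))))
      (fun m => (m:ℕ)) ?_ ?_
    · calc ∑' m, F₃ m
          ≤ ∑' j : ℕ, ENNReal.ofReal (2^a * N^t) * ENNReal.ofReal ((j:ℝ)^(-(a+d+t))) := h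
        _ = ENNReal.ofReal (2^a * N^t) * ∑' j : ℕ, ENNReal.ofReal ((j:ℝ)^(-(a+d+t))) :=
            ENNReal.tsum_mul_left
        _ = _ := by rw [zen_eq hadt]
    · intro m₁ _ m₂ _ hh
      exact PNat.coe_injective (by simpa using hh)
    · intro m
      by_cases hc : (m:ℕ) < (n:ℕ) ∧ 2*(m:ℕ) < (n:ℕ)
      · rw [hF3]; simp only [if_pos hc, hB]
        have hM0 : (0:ℝ) < ((m:ℕ):ℝ) := by exact_mod_cast m.pos
        have hMN : ((m:ℕ):ℝ) < N := by rw [hNdef]; exact_mod_cast hc.1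
        have h2M : 2*((m:ℕ):ℝ) < N := by rw [hNdef]; exact_mod_cast hc.2
        rw [← ENNReal.ofReal_mul h2aNt]
        apply ENNReal.ofReal_le_ofReal
        have habs : |N - ((m:ℕ):ℝ)| = N - ((m:ℕ):ℝ) := abs_of_pos (by linarith)
        rw [habs]
        set k : ℝ := N - ((m:ℕ):ℝ) with hk
        set M : ℝ := ((m:ℕ):ℝ) with hM
        have hk0 : (0:ℝ) < k := by rw [hk]; linarith
        have hkN2 : N/2 ≤ k := by rw [hk]; linarith
        have stepA : M^(-d) = M^(a+t) * M^(-(a+d+t)) := by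
          rw [← Real.rpow_add hM0]; congr 1; ring
        have stepB : M^(a+t) ≤ N^(a+t) := Real.rpow_le_rpow hM0.le hMN.le (by linarith)
        have stepC : k^(-a) ≤ (N/2)^(-a) :=
          Real.rpow_le_rpow_of_nonpos (by linarith) hkN2 (neg_nonpos.mpr ha)
        have stepD : (N/2)^(-a) = 2^a * N^(-a) := by
          rw [Real.div_rpow hN0.le (by norm_num : (0:ℝ) ≤ 2),
            Real.rpow_neg (by norm_num : (0:ℝ) ≤ 2), div_inv_eq_mul]
          ring
        have stepE : N^(-a) * N^(a+t) = N^t := by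
          rw [← Real.rpow_add hN0]; congr 1; ring
        calc k^(-a) * M^(-d)
            = k^(-a) * (M^(a+t) * M^(-(a+d+t))) := by rw [← stepA]
          _ ≤ (2^a * N^(-a)) * (N^(a+t) * M^(-(a+d+t))) := by
              apply mul_le_mul
              · exact stepC.trans_eq stepD
              · exact mul_le_mul_of_nonneg_right stepB (rpow_nonneg hM0.le _)
              · positivity
              · positivity
          _ = 2^a * N^t * M^(-(a+d+t)) := by
              linear_combination (2^a * M^(-(a+d+t))) * stepE
      · rw [hF3]; simp only [if_neg hc]; exact zero_le
  calc ∑' m : ℕ+, (if n ≠ m then B m else 0)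
      = ∑' m : ℕ+, (F₁ m + F₂ m + F₃ m) := tsum_congr hsplit
    _ = (∑' m, F₁ m) + (∑' m, F₂ m) + (∑' m, F₃ m) := by
        rw [ENNReal.tsum_add, ENNReal.tsum_add]
    _ ≤ ENNReal.ofReal (N^t) * ENNReal.ofReal (zzeta (a+d))
        + ENNReal.ofReal (2^d * N^t) * ENNReal.ofReal (zzeta (a+d+t))
        + ENNReal.ofReal (2^a * N^t) * ENNReal.ofReal (zzeta (a+d+t)) :=
        add_le_add (add_le_add hR1 hR2) hR3
    _ = ENNReal.ofReal ((zzeta (a+d) + (2^d + 2^a) * zzeta (a+d+t)) * N ^ t) := by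
        rw [← ENNReal.ofReal_mul hNt0,
          ← ENNReal.ofReal_mul (by positivity : (0:ℝ) ≤ 2^d * N^t),
          ← ENNReal.ofReal_mul (by positivity : (0:ℝ) ≤ 2^a * N^t),
          ← ENNReal.ofReal_add (mul_nonneg hNt0 (zzeta_nonneg _))
            (mul_nonneg (by positivity) (zzeta_nonneg _)),
          ← ENNReal.ofReal_add
            (add_nonneg (mul_nonneg hNt0 (zzeta_nonneg _))
              (mul_nonneg (by positivity) (zzeta_nonneg _)))
            (mul_nonneg (by positivity) (zzeta_nonneg _))]
        congr 1
        ring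

lemma amgm_step (b t d : ℝ) (hdd : d = 2*b - t) (N M xn xm A : ℝ)
    (hN : 0 < N) (hM : 0 < M) (hA : 0 ≤ A) (hxn : 0 ≤ xn) (hxm : 0 ≤ xm) :
    A * N^(-b) * M^(-b) * xn * xm ≤
      2⁻¹ * xn^2 * N^(-t) * (A * M^(-d)) + 2⁻¹ * xm^2 * M^(-t) * (A * N^(-d)) := by
  subst hdd
  set u := N^(b-t) * M^(t-b) with hu
  set v := N^(t-b) * M^(b-t) with hv
  have hu0 : 0 < u := by rw [hu]; positivity
  have hv0 : 0 < v := by rw [hv]; positivity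
  have huv : u * v = 1 := by
    calc u*v = (N^(b-t)*N^(t-b)) * (M^(t-b)*M^(b-t)) := by rw [hu, hv]; ring
      _ = N^((b-t)+(t-b)) * M^((t-b)+(b-t)) := by
          rw [Real.rpow_add hN, Real.rpow_add hM]
      _ = 1 := by norm_num
  have key : xn * xm ≤ 2⁻¹*u*xn^2 + 2⁻¹*v*xm^2 := by
    nlinarith [sq_nonneg (u * xn - xm), hu0, huv, mul_pos hu0 hv0]
  have e1 : N^(-t) * M^(-(2*b-t)) = (N^(-b) * M^(-b)) * u := by
    rw [hu, show (-t) = (-b) + (b - t) by ring, show (-(2*b-t)) = (-b) + (t-b) by ring,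
      Real.rpow_add hN, Real.rpow_add hM]
    ring
  have e2 : M^(-t) * N^(-(2*b-t)) = (N^(-b) * M^(-b)) * v := by
    rw [hv, show (-t) = (-b) + (b - t) by ring, show (-(2*b-t)) = (-b) + (t-b) by ring,
      Real.rpow_add hN, Real.rpow_add hM]
    ring
  calc A * N^(-b) * M^(-b) * xn * xm = A * ((N^(-b)*M^(-b)) * (xn*xm)) := by ring
    _ ≤ A * ((N^(-b)*M^(-b)) * (2⁻¹*u*xn^2 + 2⁻¹*v*xm^2)) := by
        apply mul_le_mul_of_nonneg_left _ hA
        apply mul_le_mul_of_nonneg_left key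
        positivity
    _ = 2⁻¹ * xn^2 * ((N^(-b)*M^(-b)) * u) * A + 2⁻¹ * xm^2 * ((N^(-b)*M^(-b)) * v) * A := by
        ring
    _ = 2⁻¹ * xn^2 * N^(-t) * (A * M^(-(2*b-t))) + 2⁻¹ * xm^2 * M^(-t) * (A * N^(-(2*b-t))) := by
        rw [← e1, ← e2]; ring

/-- For `a ≥ 0` and `b > (1-a)/2` with `b ≥ 0`, the matrix with off-diagonal entries
`|n-m|^{-a} n^{-b} m^{-b}` (and zero diagonal) defines a bounded operator on `ℓ²(ℕ)`:
there is `K > 0` with `Σ_{n≠m} |n-m|^{-a} n^{-b} m^{-b} x_n x_m ≤ K Σ_n x_n²`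
for every square-summable nonnegative sequence `(x_n)_{n≥1}`. -/
theorem schur_bound_matrix
    (a b : ℝ) (ha : 0 ≤ a) (hb : b > (1 - a) / 2) (hb0 : 0 ≤ b) :
    ∃ K > (0 : ℝ), ∀ x : ℕ+ → ℝ, (∀ n, 0 ≤ x n) →
      Summable (fun n : ℕ+ => (x n) ^ 2) →
      ∑' (p : ℕ+ × ℕ+),
          (if p.1 ≠ p.2 then
            ENNReal.ofReal (|((p.1 : ℕ) : ℝ) - ((p.2 : ℕ) : ℝ)| ^ (-a) *
              ((p.1 : ℕ) : ℝ) ^ (-b) * ((p.2 : ℕ) : ℝ) ^ (-b) * x p.1 * x p.2)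
          else 0) ≤
        ENNReal.ofReal K * ∑' (n : ℕ+), ENNReal.ofReal ((x n) ^ 2) := by
  have hs0 : 0 < a + 2*b - 1 := by linarith
  set t := min (a + 2*b - 1) (2*b) / 2 with htdef
  have ht0 : 0 ≤ t := by
    have h1 : 0 ≤ min (a+2*b-1) (2*b) := le_min (by linarith) (by linarith)
    rw [htdef]; linarith
  have htb : t ≤ b := by
    have := min_le_right (a+2*b-1) (2*b); rw [htdef]; linarith
  have hts : t < a + 2*b - 1 := by
    have := min_le_left (a+2*b-1) (2*b); rw [htdef]; linarith
  set d := 2*b - t with hddef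
  have hd0 : 0 ≤ d := by rw [hddef]; linarith
  have had : 1 < a + d := by rw [hddef]; linarith
  have hadt : 1 < a + d + t := by rw [hddef]; linarith
  set K := zzeta (a+d) + (2^d + 2^a) * zzeta (a+d+t) with hKdef
  have hK0' : 0 ≤ K := by
    rw [hKdef]
    have h1 := zzeta_nonneg (a+d)
    have h2 := zzeta_nonneg (a+d+t)
    have h3 : (0:ℝ) ≤ 2^d + 2^a := by positivity
    nlinarith
  have hK0 : 0 < K := by
    rw [hKdef]
    have h1 := zzeta_nonneg (a+d)
    have h2 := zzeta_pos hadt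
    have h3 : (0:ℝ) < 2^d + 2^a := by positivity
    nlinarith
  refine ⟨K, hK0, ?_⟩
  intro x hx _
  set W : ℕ+ × ℕ+ → ℝ≥0∞ := fun q =>
    if q.1 ≠ q.2 then
      ENNReal.ofReal (2⁻¹ * x q.1 ^ 2 * ((q.1:ℕ):ℝ)^(-t) *
        (|((q.1:ℕ):ℝ) - ((q.2:ℕ):ℝ)| ^ (-a) * ((q.2:ℕ):ℝ) ^ (-d)))
    else 0 with hW
  have hpoint : ∀ p : ℕ+ × ℕ+,
      (if p.1 ≠ p.2 then
        ENNReal.ofReal (|((p.1 : ℕ) : ℝ) - ((p.2 : ℕ) : ℝ)| ^ (-a) *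
          ((p.1 : ℕ) : ℝ) ^ (-b) * ((p.2 : ℕ) : ℝ) ^ (-b) * x p.1 * x p.2)
      else 0) ≤ W p + W p.swap := by
    rintro ⟨n, m⟩
    by_cases hnm : n = m
    · subst hnm; simp [hW]
    · have hmn : m ≠ n := fun h => hnm h.symm
      have hN0 : (0:ℝ) < ((n:ℕ):ℝ) := by exact_mod_cast n.pos
      have hM0 : (0:ℝ) < ((m:ℕ):ℝ) := by exact_mod_cast m.pos
      rw [hW]
      simp only [Prod.swap_prod_mk, ne_eq]
      rw [if_pos hnm, if_pos hnm, if_pos hmn]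
      refine le_trans (ENNReal.ofReal_le_ofReal ?_) ENNReal.ofReal_add_le
      rw [show |((m:ℕ):ℝ) - ((n:ℕ):ℝ)| = |((n:ℕ):ℝ) - ((m:ℕ):ℝ)| from abs_sub_comm _ _]
      exact amgm_step b t d hddef _ _ _ _ _ hN0 hM0 (by positivity) (hx n) (hx m)
  have hWbound : ∑' p : ℕ+ × ℕ+, W p ≤
      ENNReal.ofReal (2⁻¹ * K) * ∑' n : ℕ+, ENNReal.ofReal (x n ^ 2) := by
    rw [ENNReal.tsum_prod']
    have hrow : ∀ n : ℕ+, ∑' m : ℕ+, W (n, m) ≤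
        ENNReal.ofReal (2⁻¹ * K) * ENNReal.ofReal (x n ^ 2) := by
      intro n
      have hN0 : (0:ℝ) < ((n:ℕ):ℝ) := by exact_mod_cast n.pos
      have hcn : (0:ℝ) ≤ 2⁻¹ * x n ^ 2 * ((n:ℕ):ℝ)^(-t) := by
        have := rpow_nonneg hN0.le (-t)
        have := sq_nonneg (x n)
        positivity
      have hfact : ∀ m : ℕ+, W (n, m) =
          ENNReal.ofReal (2⁻¹ * x n ^ 2 * ((n:ℕ):ℝ)^(-t)) *
            (if n ≠ m then
              ENNReal.ofReal (|((n:ℕ):ℝ) - ((m:ℕ):ℝ)| ^ (-a) * ((m:ℕ):ℝ) ^ (-d))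
            else 0) := by
        intro m
        rw [hW]
        by_cases h : n = m
        · simp [h]
        · simp only [ne_eq, if_pos h]
          rw [← ENNReal.ofReal_mul hcn]
      calc ∑' m : ℕ+, W (n, m)
          = ENNReal.ofReal (2⁻¹ * x n ^ 2 * ((n:ℕ):ℝ)^(-t)) *
            ∑' m : ℕ+, (if n ≠ m then
              ENNReal.ofReal (|((n:ℕ):ℝ) - ((m:ℕ):ℝ)| ^ (-a) * ((m:ℕ):ℝ) ^ (-d))
            else 0) := by rw [tsum_congr hfact, ENNReal.tsum_mul_left]
        _ ≤ ENNReal.ofReal (2⁻¹ * x n ^ 2 * ((n:ℕ):ℝ)^(-t)) *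
            ENNReal.ofReal ((zzeta (a+d) + (2^d + 2^a) * zzeta (a+d+t)) * ((n:ℕ):ℝ) ^ t) :=
            mul_le_mul_right (row_bound a d t ha hd0 ht0 had n) _
        _ = ENNReal.ofReal (2⁻¹ * K * x n ^ 2) := by
            rw [← hKdef, ← ENNReal.ofReal_mul hcn]
            congr 1
            have hNt : ((n:ℕ):ℝ)^(-t) * ((n:ℕ):ℝ)^t = 1 := by
              rw [← Real.rpow_add hN0]; norm_num
            linear_combination (2⁻¹ * x n ^ 2 * K) * hNt
        _ = ENNReal.ofReal (2⁻¹ * K) * ENNReal.ofReal (x n ^ 2) := by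
            rw [← ENNReal.ofReal_mul (by positivity)]
    calc ∑' (n : ℕ+) (m : ℕ+), W (n, m)
        ≤ ∑' n : ℕ+, ENNReal.ofReal (2⁻¹ * K) * ENNReal.ofReal (x n ^ 2) :=
          ENNReal.tsum_le_tsum hrow
      _ = ENNReal.ofReal (2⁻¹ * K) * ∑' n : ℕ+, ENNReal.ofReal (x n ^ 2) :=
          ENNReal.tsum_mul_left
  have hswap : ∑' p : ℕ+ × ℕ+, W p.swap = ∑' p : ℕ+ × ℕ+, W p := by
    have h := (Equiv.prodComm ℕ+ ℕ+).tsum_eq W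
    simpa [Equiv.coe_prodComm] using h
  calc ∑' (p : ℕ+ × ℕ+),
        (if p.1 ≠ p.2 then
          ENNReal.ofReal (|((p.1 : ℕ) : ℝ) - ((p.2 : ℕ) : ℝ)| ^ (-a) *
            ((p.1 : ℕ) : ℝ) ^ (-b) * ((p.2 : ℕ) : ℝ) ^ (-b) * x p.1 * x p.2)
        else 0)
      ≤ ∑' p : ℕ+ × ℕ+, (W p + W p.swap) := ENNReal.tsum_le_tsum hpoint
    _ = (∑' p : ℕ+ × ℕ+, W p) + ∑' p : ℕ+ × ℕ+, W p.swap := ENNReal.tsum_add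
    _ = 2 * ∑' p : ℕ+ × ℕ+, W p := by rw [hswap, two_mul]
    _ ≤ 2 * (ENNReal.ofReal (2⁻¹ * K) * ∑' n : ℕ+, ENNReal.ofReal (x n ^ 2)) :=
        mul_le_mul_right hWbound 2
    _ = ENNReal.ofReal K * ∑' n : ℕ+, ENNReal.ofReal (x n ^ 2) := by
        rw [← mul_assoc]
        congr 1
        rw [show (2:ℝ≥0∞) = ENNReal.ofReal 2 by norm_num,
          ← ENNReal.ofReal_mul (by norm_num : (0:ℝ) ≤ 2)]
        congr 1
        ring
end

section
/- Let μ be a Borel probability measure on the circle 𝕋 = ℝ/ℤ and let (a_n)_{n∈ℤ} be complex numbers. If Σ_{n,m∈ℤ} |a_n| |a_m| |μ̂(n−m)| · log₂(|n|+1) · log₂(|m|+1) < ∞, then the two-sided trigonometric series Σ_{n∈ℤ} a_n exp(2πinx) converges μ-almost everywhere on 𝕋, in the sense that the symmetric partial sums Σ_{|n|≤N} a_n exp(2πinx) converge in ℂ as N → ∞ for μ-almost every x ∈ 𝕋. -/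
set_option maxHeartbeats 1000000

open MeasureTheory Filter
open scoped ENNReal

/- ### Elementary inequality -/
lemma c_mul_add_sq_le (a b c : ℝ) : c*(a+b)^2 ≤ (1+c)*(c*a^2+b^2) := by
  nlinarith [sq_nonneg (c*a - b)]

/- ### The binary-tree (Menshov–Rademacher) pointwise lemma -/
lemma mr_tree (u : ℕ → ℂ) : ∀ (i m r : ℕ), r ≤ 2^i →
    ‖∑ j ∈ Finset.Ico (m * 2^i) (m * 2^i + r), u j‖^2 ≤
    (i+1 : ℝ) * ∑ i' ∈ Finset.range (i+1),
      ∑ m' ∈ Finset.Ico (m * 2^(i-i')) ((m+1) * 2^(i-i')),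
        ‖∑ j ∈ Finset.Ico (m' * 2^i') ((m'+1) * 2^i'), u j‖^2 := by
  intro i
  induction i with
  | zero =>
    intro m r hr
    interval_cases r
    · simp
    · simp [Nat.Ico_succ_singleton]
  | succ i IH =>
    intro m r hr
    rw [show ((i+1:ℕ):ℝ) + 1 = ((i:ℝ)+1)+1 from by push_cast; ring]
    set nsq : ℕ → ℕ → ℝ := fun i' m' => ‖∑ j ∈ Finset.Ico (m' * 2^i') ((m'+1) * 2^i'), u j‖^2 with hnsq
    set Z := ∑ i' ∈ Finset.range (i+2),
      ∑ m' ∈ Finset.Ico (m * 2^(i+1-i')) ((m+1) * 2^(i+1-i')), nsq i' m' with hZ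
    have hZnn : 0 ≤ Z := by positivity
    have hnn : ∀ i' m', 0 ≤ nsq i' m' := by intro i' m'; positivity
    have hsub : ∀ i', i' ≤ i → ∀ c, c ≤ 1 →
        ∑ m' ∈ Finset.Ico ((2*m+c) * 2^(i-i')) ((2*m+c+1) * 2^(i-i')), nsq i' m' ≤
        ∑ m' ∈ Finset.Ico (m * 2^(i+1-i')) ((m+1) * 2^(i+1-i')), nsq i' m' := by
      intro i' hi' c hc
      apply Finset.sum_le_sum_of_subset_of_nonneg
      · have h1 : i + 1 - i' = (i - i') + 1 := by omega
        apply Finset.Ico_subset_Ico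
        · rw [h1, pow_succ]
          calc m * (2 ^ (i - i') * 2) = (2*m) * 2^(i-i') := by ring
            _ ≤ (2*m+c) * 2^(i-i') := by apply Nat.mul_le_mul_right; omega
        · rw [h1, pow_succ]
          calc (2*m+c+1) * 2^(i-i') ≤ (2*m+2) * 2^(i-i') := by
                apply Nat.mul_le_mul_right; omega
            _ = (m+1) * (2 ^ (i - i') * 2) := by ring
      · intros; apply hnn
    have hZsplit : Z = (∑ i' ∈ Finset.range (i+1),
        ∑ m' ∈ Finset.Ico (m * 2^(i+1-i')) ((m+1) * 2^(i+1-i')), nsq i' m')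
        + ∑ m' ∈ Finset.Ico (m * 2^(i+1-(i+1))) ((m+1) * 2^(i+1-(i+1))), nsq (i+1) m' := by
      rw [hZ, Finset.sum_range_succ]
    have hZ1 : (∑ i' ∈ Finset.range (i+1),
        ∑ m' ∈ Finset.Ico (m * 2^(i+1-i')) ((m+1) * 2^(i+1-i')), nsq i' m') ≤ Z := by
      rw [hZsplit]
      have : 0 ≤ ∑ m' ∈ Finset.Ico (m * 2^(i+1-(i+1))) ((m+1) * 2^(i+1-(i+1))), nsq (i+1) m' := by
        apply Finset.sum_nonneg; intros; apply hnn
      linarith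
    rcases le_or_gt r (2^i) with hr1 | hr2
    · have he : m * 2^(i+1) = 2*m * 2^i := by ring
      rw [he]
      calc ‖∑ j ∈ Finset.Ico (2*m * 2^i) (2*m * 2^i + r), u j‖^2
          ≤ (i+1 : ℝ) * ∑ i' ∈ Finset.range (i+1),
              ∑ m' ∈ Finset.Ico ((2*m) * 2^(i-i')) ((2*m+1) * 2^(i-i')), nsq i' m' :=
            IH (2*m) r hr1
        _ ≤ (i+1 : ℝ) * ∑ i' ∈ Finset.range (i+1),
              ∑ m' ∈ Finset.Ico (m * 2^(i+1-i')) ((m+1) * 2^(i+1-i')), nsq i' m' := by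
            apply mul_le_mul_of_nonneg_left _ (by positivity)
            apply Finset.sum_le_sum
            intro i' hi'
            have := hsub i' (by simp at hi'; omega) 0 (by omega)
            simpa using this
        _ ≤ (i+1 : ℝ) * Z := by
            apply mul_le_mul_of_nonneg_left hZ1 (by positivity)
        _ ≤ (((i:ℝ)+1)+1) * Z := by nlinarith
    · have hb1 : 2*m * 2^i ≤ (2*m+1) * 2^i := by apply Nat.mul_le_mul_right; omega
      have ha : m * 2^(i+1) = 2*m * 2^i := by ring
      have hsplitsum : ∑ j ∈ Finset.Ico (m * 2^(i+1)) (m * 2^(i+1) + r), u j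
          = (∑ j ∈ Finset.Ico (2*m * 2^i) ((2*m+1) * 2^i), u j)
            + ∑ j ∈ Finset.Ico ((2*m+1) * 2^i) ((2*m+1) * 2^i + (r - 2^i)), u j := by
        have h7 : (2*m+1) * 2^i = 2*m*2^i + 2^i := by ring
        rw [ha, show 2*m*2^i + r = (2*m+1)*2^i + (r - 2^i) from by omega]
        exact (Finset.sum_Ico_consecutive u hb1 (by omega)).symm
      set A := ∑ j ∈ Finset.Ico (2*m * 2^i) ((2*m+1) * 2^i), u j with hA
      set B := ∑ j ∈ Finset.Ico ((2*m+1) * 2^i) ((2*m+1) * 2^i + (r - 2^i)), u j with hB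
      have hrr : r - 2^i ≤ 2^i := by
        have : (2:ℕ)^(i+1) = 2^i + 2^i := by rw [pow_succ]; omega
        omega
      have hBle : ‖B‖^2 ≤ (i+1 : ℝ) * ∑ i' ∈ Finset.range (i+1),
          ∑ m' ∈ Finset.Ico ((2*m+1) * 2^(i-i')) ((2*m+1+1) * 2^(i-i')), nsq i' m' :=
        IH (2*m+1) (r - 2^i) hrr
      set Y := ∑ i' ∈ Finset.range (i+1),
          ∑ m' ∈ Finset.Ico ((2*m+1) * 2^(i-i')) ((2*m+1+1) * 2^(i-i')), nsq i' m' with hY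
      have hYnn : 0 ≤ Y := by positivity
      have hAY : ‖A‖^2 + Y ≤ Z := by
        have hYs : Y = (∑ i' ∈ Finset.range i,
            ∑ m' ∈ Finset.Ico ((2*m+1) * 2^(i-i')) ((2*m+1+1) * 2^(i-i')), nsq i' m')
            + ∑ m' ∈ Finset.Ico ((2*m+1) * 2^(i-i)) ((2*m+1+1) * 2^(i-i)), nsq i m' := by
          rw [hY, Finset.sum_range_succ]
        have hYi : (∑ m' ∈ Finset.Ico ((2*m+1) * 2^(i-i)) ((2*m+1+1) * 2^(i-i)), nsq i m')
            = nsq i (2*m+1) := by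
          have : i - i = 0 := by omega
          rw [this, pow_zero, mul_one, mul_one, Nat.Ico_succ_singleton, Finset.sum_singleton]
        have hZi : (∑ m' ∈ Finset.Ico (m * 2^(i+1-i)) ((m+1) * 2^(i+1-i)), nsq i m')
            = nsq i (2*m) + nsq i (2*m+1) := by
          have h1 : i + 1 - i = 1 := by omega
          rw [h1, pow_one]
          have h2 : Finset.Ico (m*2) ((m+1)*2) = {2*m, 2*m+1} := by
            ext j; simp [Finset.mem_Ico]; omega
          rw [h2, Finset.sum_pair (by omega)]
        have hAeq : ‖A‖^2 = nsq i (2*m) := by rw [hnsq]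
        have hmid : (∑ i' ∈ Finset.range (i+1),
            ∑ m' ∈ Finset.Ico (m * 2^(i+1-i')) ((m+1) * 2^(i+1-i')), nsq i' m')
            = (∑ i' ∈ Finset.range i,
              ∑ m' ∈ Finset.Ico (m * 2^(i+1-i')) ((m+1) * 2^(i+1-i')), nsq i' m')
              + (nsq i (2*m) + nsq i (2*m+1)) := by
          rw [Finset.sum_range_succ, hZi]
        have h5 : (∑ i' ∈ Finset.range i,
              ∑ m' ∈ Finset.Ico ((2*m+1) * 2^(i-i')) ((2*m+1+1) * 2^(i-i')), nsq i' m')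
            ≤ ∑ i' ∈ Finset.range i,
              ∑ m' ∈ Finset.Ico (m * 2^(i+1-i')) ((m+1) * 2^(i+1-i')), nsq i' m' :=
          Finset.sum_le_sum (fun i' hi' => hsub i' (by simp at hi'; omega) 1 (by omega))
        calc ‖A‖^2 + Y ≤ (∑ i' ∈ Finset.range i,
              ∑ m' ∈ Finset.Ico (m * 2^(i+1-i')) ((m+1) * 2^(i+1-i')), nsq i' m')
              + (nsq i (2*m) + nsq i (2*m+1)) := by
              rw [hYs, hYi, hAeq]; linarith
          _ = ∑ i' ∈ Finset.range (i+1),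
              ∑ m' ∈ Finset.Ico (m * 2^(i+1-i')) ((m+1) * 2^(i+1-i')), nsq i' m' := hmid.symm
          _ ≤ Z := hZ1
      rw [hsplitsum]
      have htri : ‖A + B‖^2 ≤ (‖A‖ + ‖B‖)^2 :=
        pow_le_pow_left₀ (norm_nonneg _) (norm_add_le _ _) 2
      have hkey := c_mul_add_sq_le ‖A‖ ‖B‖ ((i:ℝ)+1)
      have hipos : (0:ℝ) < (i:ℝ)+1 := by positivity
      apply le_of_mul_le_mul_left _ hipos
      calc ((i:ℝ)+1) * ‖A+B‖^2 ≤ ((i:ℝ)+1) * (‖A‖+‖B‖)^2 :=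
            mul_le_mul_of_nonneg_left htri hipos.le
        _ ≤ (1+((i:ℝ)+1)) * (((i:ℝ)+1)*‖A‖^2+‖B‖^2) := hkey
        _ ≤ (1+((i:ℝ)+1)) * (((i:ℝ)+1)*‖A‖^2+((i:ℝ)+1)*Y) :=
            mul_le_mul_of_nonneg_left (by linarith) (by positivity)
        _ = ((i:ℝ)+1) * ((1+((i:ℝ)+1)) * (‖A‖^2+Y)) := by ring
        _ ≤ ((i:ℝ)+1) * ((1+((i:ℝ)+1)) * Z) :=
            mul_le_mul_of_nonneg_left (mul_le_mul_of_nonneg_left hAY (by positivity)) hipos.le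
        _ = ((i:ℝ)+1) * ((((i:ℝ)+1)+1) * Z) := by ring

/- ### Fourier / measure basics -/
noncomputable def Mhat (μ : Measure UnitAddCircle) (k : ℤ) : ℝ := ‖∫ x, fourier (-k) x ∂μ‖

lemma cont_integrable {g : UnitAddCircle → ℂ} (hg : Continuous g)
    (μ : Measure UnitAddCircle) [IsProbabilityMeasure μ] : Integrable g μ :=
  hg.integrable_of_hasCompactSupport (HasCompactSupport.of_compactSpace _)

lemma cont_integrable' {g : UnitAddCircle → ℝ} (hg : Continuous g)
    (μ : Measure UnitAddCircle) [IsProbabilityMeasure μ] : Integrable g μ :=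
  hg.integrable_of_hasCompactSupport (HasCompactSupport.of_compactSpace _)

lemma Mhat_eq (μ : Measure UnitAddCircle) [IsProbabilityMeasure μ] (k : ℤ) :
    ‖∫ x, fourier k x ∂μ‖ = Mhat μ k := by
  have : ∫ x, fourier (-k) x ∂μ = (starRingEnd ℂ) (∫ x, fourier k x ∂μ) := by
    rw [← integral_conj]; congr 1; ext x; rw [← fourier_neg]
  rw [Mhat, this, RCLike.norm_conj]

lemma Mhat_nonneg (μ : Measure UnitAddCircle) (k : ℤ) : 0 ≤ Mhat μ k := norm_nonneg _

lemma cont_S (a : ℤ → ℂ) (G : Finset ℤ) :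
    Continuous (fun x : UnitAddCircle => ∑ n ∈ G, a n * fourier n x) := by
  apply continuous_finset_sum
  intro n _
  exact continuous_const.mul (fourier n).continuous

lemma qf (μ : Measure UnitAddCircle) [IsProbabilityMeasure μ] (a : ℤ → ℂ) (G : Finset ℤ) :
    ∫ x, ‖∑ n ∈ G, a n * fourier n x‖^2 ∂μ ≤
    ∑ n ∈ G, ∑ m ∈ G, ‖a n‖ * ‖a m‖ * Mhat μ (n - m) := by
  set S : UnitAddCircle → ℂ := fun x => ∑ n ∈ G, a n * fourier n x with hS
  have hexp : ∀ x, ((‖S x‖^2 : ℝ) : ℂ)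
      = ∑ n ∈ G, ∑ m ∈ G, (a n * (starRingEnd ℂ) (a m)) * fourier (n - m) x := by
    intro x
    have h1 : ((‖S x‖^2 : ℝ) : ℂ) = S x * (starRingEnd ℂ) (S x) := by
      rw [Complex.mul_conj']; norm_cast
    rw [h1, hS]
    rw [map_sum, Finset.sum_mul_sum]
    apply Finset.sum_congr rfl
    intro n _
    apply Finset.sum_congr rfl
    intro m _
    rw [map_mul, ← fourier_neg, sub_eq_add_neg, fourier_add]
    ring
  have hintnm : ∀ (c : ℂ) (k : ℤ), Integrable (fun x : UnitAddCircle => c * fourier k x) μ :=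
    fun c k => cont_integrable (continuous_const.mul (fourier k).continuous) μ
  have h3 : (∫ x, S x * (starRingEnd ℂ) (S x) ∂μ)
      = ∑ n ∈ G, ∑ m ∈ G, (a n * (starRingEnd ℂ) (a m)) * ∫ x, fourier (n-m) x ∂μ := by
    calc ∫ x, S x * (starRingEnd ℂ) (S x) ∂μ
        = ∫ x, ∑ n ∈ G, ∑ m ∈ G, (a n * (starRingEnd ℂ) (a m)) * fourier (n - m) x ∂μ := by
          congr 1; ext x; rw [← hexp x]
          rw [Complex.mul_conj']; norm_cast
      _ = ∑ n ∈ G, ∑ m ∈ G, (a n * (starRingEnd ℂ) (a m)) * ∫ x, fourier (n-m) x ∂μ := by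
          rw [integral_finset_sum]
          · apply Finset.sum_congr rfl
            intro n _
            rw [integral_finset_sum]
            · apply Finset.sum_congr rfl
              intro m _
              exact integral_const_mul _ _
            · intro m _; exact hintnm _ _
          · intro n _
            apply integrable_finset_sum
            intro m _; exact hintnm _ _
  have h4 : ∫ x, ‖S x‖^2 ∂μ = RCLike.re (∫ x, S x * (starRingEnd ℂ) (S x) ∂μ) := by
    rw [← integral_re]
    · congr 1; ext x; rw [RCLike.mul_conj, ← RCLike.ofReal_pow, RCLike.ofReal_re]
    · apply cont_integrable
      exact ((cont_S a G).mul ((cont_S a G).star))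
  calc ∫ x, ‖S x‖^2 ∂μ
      = RCLike.re (∫ x, S x * (starRingEnd ℂ) (S x) ∂μ) := h4
    _ ≤ ‖∫ x, S x * (starRingEnd ℂ) (S x) ∂μ‖ := RCLike.re_le_norm _
    _ = ‖∑ n ∈ G, ∑ m ∈ G, (a n * (starRingEnd ℂ) (a m)) * ∫ x, fourier (n-m) x ∂μ‖ := by
        rw [h3]
    _ ≤ ∑ n ∈ G, ∑ m ∈ G, ‖(a n * (starRingEnd ℂ) (a m)) * ∫ x, fourier (n-m) x ∂μ‖ := by
        refine (norm_sum_le _ _).trans (Finset.sum_le_sum fun n _ => norm_sum_le _ _)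
    _ = ∑ n ∈ G, ∑ m ∈ G, ‖a n‖ * ‖a m‖ * Mhat μ (n - m) := by
        apply Finset.sum_congr rfl
        intro n _
        apply Finset.sum_congr rfl
        intro m _
        rw [norm_mul, norm_mul, RCLike.norm_conj, Mhat_eq]

/- ### ℕ ↔ ℤ index sets -/
def GZ (s : Finset ℕ) : Finset ℤ := s.image (fun j : ℕ => (j:ℤ)) ∪ s.image (fun j : ℕ => -(j:ℤ))

lemma mem_GZ {s : Finset ℕ} {n : ℤ} : n ∈ GZ s ↔ n.natAbs ∈ s := by
  simp only [GZ, Finset.mem_union, Finset.mem_image]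
  constructor
  · rintro (⟨j, hj, rfl⟩ | ⟨j, hj, rfl⟩) <;> simpa
  · intro h
    rcases le_or_gt 0 n with hn | hn
    · left; exact ⟨n.natAbs, h, by omega⟩
    · right; exact ⟨n.natAbs, h, by omega⟩

lemma GZ_disjoint {s t : Finset ℕ} (h : Disjoint s t) : Disjoint (GZ s) (GZ t) := by
  rw [Finset.disjoint_left] at h ⊢
  intro n hn hn'
  exact h (mem_GZ.1 hn) (mem_GZ.1 hn')

lemma GZ_subset {s t : Finset ℕ} (h : s ⊆ t) : GZ s ⊆ GZ t :=
  fun n hn => mem_GZ.2 (h (mem_GZ.1 hn))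

lemma prod_disjoint {s t u v : Finset ℤ} (h : Disjoint s t) :
    Disjoint (s ×ˢ u) (t ×ˢ v) := by
  rw [Finset.disjoint_left] at h ⊢
  rintro ⟨p1, p2⟩ hp hq
  rw [Finset.mem_product] at hp hq
  exact h hp.1 hq.1

lemma sum_GZ (g : ℤ → ℂ) (s : Finset ℕ) (h0 : 0 ∉ s) :
    ∑ n ∈ GZ s, g n = ∑ j ∈ s, (g (j:ℤ) + g (-(j:ℤ))) := by
  rw [GZ, Finset.sum_union, Finset.sum_image (by intro x _ y _ h; simpa using h),
    Finset.sum_image (by intro x _ y _ h; simpa using h), ← Finset.sum_add_distrib]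
  rw [Finset.disjoint_left]
  rintro x hx hx'
  simp only [Finset.mem_image] at hx hx'
  obtain ⟨j, hj, rfl⟩ := hx
  obtain ⟨j', hj', he⟩ := hx'
  have : j = 0 := by omega
  exact h0 (this ▸ hj)

lemma sum_prod_le {I : Finset ℕ} {P : ℕ → Finset (ℤ×ℤ)} {Q : Finset (ℤ×ℤ)} {t : ℤ×ℤ → ℝ}
    (ht : ∀ p, 0 ≤ t p) (hd : (I : Set ℕ).PairwiseDisjoint P) (hQ : ∀ m ∈ I, P m ⊆ Q) :
    ∑ m ∈ I, ∑ p ∈ P m, t p ≤ ∑ p ∈ Q, t p := by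
  rw [← Finset.sum_biUnion hd]
  exact Finset.sum_le_sum_of_subset_of_nonneg (Finset.biUnion_subset.2 hQ) (fun p _ _ => ht p)

/- ### partial sums -/
noncomputable def Spart (a : ℤ → ℂ) (N : ℕ) (x : UnitAddCircle) : ℂ :=
  ∑ n ∈ Finset.Icc (-(N:ℤ)) (N:ℤ), a n * fourier n x

noncomputable def fpair (a : ℤ → ℂ) (j : ℕ) (x : UnitAddCircle) : ℂ :=
  a (j:ℤ) * fourier (j:ℤ) x + a (-(j:ℤ)) * fourier (-(j:ℤ)) x

lemma Spart_range (a : ℤ → ℂ) (x : UnitAddCircle) (N : ℕ) :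
    Spart a N x = Spart a 0 x + ∑ j ∈ Finset.range N, fpair a (j+1) x := by
  induction N with
  | zero => simp
  | succ N IH =>
    have hins : Finset.Icc (-(N+1:ℤ)) ((N+1:ℕ):ℤ)
        = insert ((N+1:ℕ):ℤ) (insert (-(N+1:ℤ)) (Finset.Icc (-(N:ℤ)) (N:ℤ))) := by
      ext n
      simp only [Finset.mem_Icc, Finset.mem_insert]
      omega
    have : Spart a (N+1) x = Spart a N x + fpair a (N+1) x := by
      rw [Spart, show (-((N+1:ℕ):ℤ)) = -(N+1:ℤ) by push_cast; ring, hins,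
        Finset.sum_insert (by simp only [Finset.mem_insert, Finset.mem_Icc]; omega),
        Finset.sum_insert (by simp only [Finset.mem_Icc]; omega)]
      rw [fpair, Spart]
      push_cast
      ring
    rw [this, IH, Finset.sum_range_succ]
    ring

lemma Spart_sub (a : ℤ → ℂ) (x : UnitAddCircle) {M N : ℕ} (h : M ≤ N) :
    Spart a N x - Spart a M x = ∑ j ∈ Finset.Ico M N, fpair a (j+1) x := by
  rw [Finset.sum_Ico_eq_sub _ h, Spart_range a x N, Spart_range a x M]
  ring

lemma sum_shift (g : ℕ → ℂ) (p q : ℕ) :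
    ∑ j ∈ Finset.Ico p q, g (j+1) = ∑ j ∈ Finset.Ico (p+1) (q+1), g j := by
  rw [← Finset.map_add_right_Ico p q 1, Finset.sum_map]
  rfl

lemma sum_fpair_GZ (a : ℤ → ℂ) (x : UnitAddCircle) (s : Finset ℕ) (h0 : 0 ∉ s) :
    ∑ j ∈ s, fpair a j x = ∑ n ∈ GZ s, a n * fourier n x := by
  rw [sum_GZ _ s h0]; rfl

lemma cont_fpair_sum (a : ℤ → ℂ) (s : Finset ℕ) :
    Continuous (fun x : UnitAddCircle => ∑ j ∈ s, fpair a j x) := by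
  apply continuous_finset_sum
  intro j _
  exact (continuous_const.mul (fourier _).continuous).add
    (continuous_const.mul (fourier _).continuous)

lemma cont_Spart (a : ℤ → ℂ) (N : ℕ) : Continuous (fun x => Spart a N x) :=
  cont_S a _

/- ### log weight bound -/
lemma w_nonneg (n : ℤ) : 0 ≤ Real.logb 2 (|(n:ℝ)| + 1) :=
  Real.logb_nonneg (by norm_num) (by have := abs_nonneg ((n:ℝ)); linarith)

lemma w_ge {κ : ℕ} {n : ℤ} (h : 2^κ ≤ n.natAbs) : (κ:ℝ) ≤ Real.logb 2 (|(n:ℝ)| + 1) := by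
  have habs : ((n.natAbs : ℕ) : ℝ) = |(n:ℝ)| := by
    rw [Nat.cast_natAbs, Int.cast_abs]
  have h1 : ((2:ℝ))^κ ≤ |(n:ℝ)| + 1 := by
    calc (2:ℝ)^κ = ((2^κ : ℕ) : ℝ) := by push_cast; ring
      _ ≤ ((n.natAbs : ℕ) : ℝ) := by exact_mod_cast h
      _ = |(n:ℝ)| := habs
      _ ≤ |(n:ℝ)| + 1 := by linarith
  calc (κ:ℝ) = Real.logb 2 ((2:ℝ)^κ) := by
        rw [Real.logb_pow, Real.logb_self_eq_one (by norm_num), mul_one]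
    _ ≤ Real.logb 2 (|(n:ℝ)| + 1) :=
        Real.logb_le_logb_of_le (by norm_num) (by positivity) h1

lemma node_disjoint (i' : ℕ) {m1 m2 : ℕ} (h : m1 ≠ m2) :
    Disjoint (Finset.Ico (m1*2^i'+1) ((m1+1)*2^i'+1)) (Finset.Ico (m2*2^i'+1) ((m2+1)*2^i'+1)) := by
  rw [Finset.disjoint_left]
  intro j hj hj'
  simp only [Finset.mem_Ico] at hj hj'
  rcases Nat.lt_or_ge m1 m2 with hl | hl
  · have h1 : (m1+1) * 2^i' ≤ m2 * 2^i' := Nat.mul_le_mul_right _ hl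
    omega
  · have h2 : m2 + 1 ≤ m1 := by omega
    have h1 : (m2+1) * 2^i' ≤ m1 * 2^i' := Nat.mul_le_mul_right _ h2
    omega

lemma pow_block_disjoint {κ κ' : ℕ} (h : κ ≠ κ') :
    Disjoint (Finset.Ico (2^κ+1) (2^(κ+1)+1)) (Finset.Ico (2^κ'+1) (2^(κ'+1)+1)) := by
  rw [Finset.disjoint_left]
  intro j hj hj'
  simp only [Finset.mem_Ico] at hj hj'
  rcases Nat.lt_or_ge κ κ' with hl | hl
  · have : (2:ℕ)^(κ+1) ≤ 2^κ' := Nat.pow_le_pow_right (by norm_num) hl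
    omega
  · have hll : κ' < κ := by omega
    have : (2:ℕ)^(κ'+1) ≤ 2^κ := Nat.pow_le_pow_right (by norm_num) hll
    omega

lemma summable_of_ofReal_tsum {r : ℕ → ℝ} (hr : ∀ k, 0 ≤ r k)
    (h : ∑' k, ENNReal.ofReal (r k) ≠ ⊤) : Summable r := by
  have h2 := ENNReal.summable_toReal h
  exact (summable_congr fun k => (ENNReal.toReal_ofReal (hr k)).symm).2 h2
/- ### Main theorem -/
/-- If `Σ_{n,m∈ℤ} |a_n||a_m||μ̂(n-m)| log₂(|n|+1) log₂(|m|+1) < ∞`, then the trigonometric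
series `Σ_{n∈ℤ} a_n e^{2πinx}` converges `μ`-almost everywhere on the circle (in the sense
of symmetric partial sums). -/
theorem trigonometric_series_converges_ae
    (μ : Measure UnitAddCircle) [IsProbabilityMeasure μ] (a : ℤ → ℂ)
    (hL : ∑' (n : ℤ) (m : ℤ), ENNReal.ofReal
        (‖a n‖ * ‖a m‖ * ‖∫ x, fourier (-(n - m)) x ∂μ‖ *
          Real.logb 2 (|(n : ℝ)| + 1) * Real.logb 2 (|(m : ℝ)| + 1)) < ⊤) :
    ∀ᵐ x ∂μ, ∃ l : ℂ,
      Tendsto (fun N : ℕ => ∑ n ∈ Finset.Icc (-(N : ℤ)) (N : ℤ), a n * fourier n x)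
        atTop (nhds l) := by
  classical
  -- the weighted kernel on pairs
  set tW : ℤ × ℤ → ℝ := fun p => ‖a p.1‖ * ‖a p.2‖ * Mhat μ (p.1 - p.2) *
      Real.logb 2 (|(p.1:ℝ)| + 1) * Real.logb 2 (|(p.2:ℝ)| + 1) with htW
  have htWnn : ∀ p, 0 ≤ tW p := by
    intro p
    apply mul_nonneg (mul_nonneg (mul_nonneg (mul_nonneg (norm_nonneg _) (norm_nonneg _))
      (Mhat_nonneg μ _)) (w_nonneg _)) (w_nonneg _)
  have hL' : ∑' p : ℤ × ℤ, ENNReal.ofReal (tW p) ≠ ⊤ := by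
    rw [ENNReal.tsum_prod']
    exact hL.ne
  -- blocks of indices
  set Fk : ℕ → Finset ℕ := fun κ => Finset.Ico (2^κ + 1) (2^(κ+1) + 1) with hFk
  set qS : ℕ → ℝ := fun κ => ∑ p ∈ GZ (Fk κ) ×ˢ GZ (Fk κ), tW p with hqS
  have hqSnn : ∀ κ, 0 ≤ qS κ := fun κ => Finset.sum_nonneg (fun p _ => htWnn p)
  -- summability of the block masses
  have hqsum : ∑' k : ℕ, ENNReal.ofReal (qS (k+1)) ≠ ⊤ := by
    apply ne_top_of_le_ne_top hL'
    rw [ENNReal.tsum_eq_iSup_sum]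
    apply iSup_le
    intro s
    have hd : (s : Set ℕ).PairwiseDisjoint (fun k => GZ (Fk (k+1)) ×ˢ GZ (Fk (k+1))) := by
      intro k _ k' _ hkk'
      exact prod_disjoint (GZ_disjoint (pow_block_disjoint (by omega)))
    calc ∑ k ∈ s, ENNReal.ofReal (qS (k+1))
        = ∑ k ∈ s, ∑ p ∈ GZ (Fk (k+1)) ×ˢ GZ (Fk (k+1)), ENNReal.ofReal (tW p) := by
          apply Finset.sum_congr rfl
          intro k _
          exact ENNReal.ofReal_sum_of_nonneg (fun p _ => htWnn p)
      _ = ∑ p ∈ s.biUnion (fun k => GZ (Fk (k+1)) ×ˢ GZ (Fk (k+1))), ENNReal.ofReal (tW p) :=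
          (Finset.sum_biUnion hd).symm
      _ ≤ ∑' p : ℤ × ℤ, ENNReal.ofReal (tW p) := ENNReal.sum_le_tsum _
  -- the weighted quadratic form bound on subsets of a block
  have bound_block : ∀ κ : ℕ, 1 ≤ κ → ∀ S : Finset ℕ, S ⊆ Fk κ →
      (κ:ℝ)^2 * ∫ x, ‖∑ j ∈ S, fpair a j x‖^2 ∂μ ≤ ∑ p ∈ GZ S ×ˢ GZ S, tW p := by
    intro κ hκ S hS
    have h0 : (0:ℕ) ∉ S := by
      intro h
      have := hS h
      rw [hFk, Finset.mem_Ico] at this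
      omega
    have hqf := qf μ a (GZ S)
    have hrw : ∫ x, ‖∑ j ∈ S, fpair a j x‖^2 ∂μ
        = ∫ x, ‖∑ n ∈ GZ S, a n * fourier n x‖^2 ∂μ := by
      congr 1; ext x; rw [sum_fpair_GZ a x S h0]
    rw [hrw]
    have hw : ∀ n ∈ GZ S, (κ:ℝ) ≤ Real.logb 2 (|(n:ℝ)| + 1) := by
      intro n hn
      apply w_ge
      have := hS (mem_GZ.1 hn)
      rw [hFk, Finset.mem_Ico] at this
      omega
    calc (κ:ℝ)^2 * ∫ x, ‖∑ n ∈ GZ S, a n * fourier n x‖^2 ∂μ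
        ≤ (κ:ℝ)^2 * ∑ n ∈ GZ S, ∑ m ∈ GZ S, ‖a n‖ * ‖a m‖ * Mhat μ (n - m) :=
          mul_le_mul_of_nonneg_left hqf (by positivity)
      _ = ∑ p ∈ GZ S ×ˢ GZ S, (κ:ℝ)^2 * (‖a p.1‖ * ‖a p.2‖ * Mhat μ (p.1 - p.2)) := by
          rw [Finset.mul_sum, Finset.sum_product]
          apply Finset.sum_congr rfl
          intro n _
          rw [Finset.mul_sum]
      _ ≤ ∑ p ∈ GZ S ×ˢ GZ S, tW p := by
          apply Finset.sum_le_sum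
          rintro ⟨n, m⟩ hp
          rw [Finset.mem_product] at hp
          set t : ℝ := ‖a n‖ * ‖a m‖ * Mhat μ (n - m) with hht
          have ht : 0 ≤ t := by
            apply mul_nonneg (mul_nonneg (norm_nonneg _) (norm_nonneg _)) (Mhat_nonneg μ _)
          have hκ0 : (0:ℝ) ≤ (κ:ℝ) := by positivity
          have h1 : (κ:ℝ) * (κ:ℝ) ≤ Real.logb 2 (|(n:ℝ)| + 1) * Real.logb 2 (|(m:ℝ)| + 1) :=
            mul_le_mul (hw n hp.1) (hw m hp.2) hκ0 (hκ0.trans (hw n hp.1))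
          calc (κ:ℝ)^2 * t = t * ((κ:ℝ) * (κ:ℝ)) := by ring
            _ ≤ t * (Real.logb 2 (|(n:ℝ)| + 1) * Real.logb 2 (|(m:ℝ)| + 1)) :=
                mul_le_mul_of_nonneg_left h1 ht
            _ = tW (n, m) := by rw [htW]; ring
  -- dyadic partial sums and their increments
  set d : ℕ → UnitAddCircle → ℂ := fun κ x => Spart a (2^(κ+1)) x - Spart a (2^κ) x with hd
  have hd_eq : ∀ κ x, d κ x = ∑ j ∈ Fk κ, fpair a j x := by
    intro κ x
    show Spart a (2^(κ+1)) x - Spart a (2^κ) x = _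
    rw [Spart_sub a x (Nat.pow_le_pow_right (by norm_num) (by omega : κ ≤ κ+1))]
    rw [sum_shift (fun j => fpair a j x) (2^κ) (2^(κ+1))]
  have hd_int : ∀ κ : ℕ, 1 ≤ κ → (κ:ℝ)^2 * ∫ x, ‖d κ x‖^2 ∂μ ≤ qS κ := by
    intro κ hκ
    have h1 : ∫ x, ‖d κ x‖^2 ∂μ = ∫ x, ‖∑ j ∈ Fk κ, fpair a j x‖^2 ∂μ := by
      congr 1; ext x; rw [hd_eq κ x]
    rw [h1, hqS]
    exact bound_block κ hκ (Fk κ) (le_refl _)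
  -- the tree maximal quantity
  set V : ℕ → UnitAddCircle → ℝ := fun κ x => ∑ i' ∈ Finset.range (κ+1),
      ∑ m' ∈ Finset.Ico (1 * 2^(κ-i')) ((1+1) * 2^(κ-i')),
        ‖∑ j ∈ Finset.Ico (m' * 2^i') ((m'+1) * 2^i'), fpair a (j+1) x‖^2 with hV
  have hVnn : ∀ κ x, 0 ≤ V κ x := by
    intro κ x
    apply Finset.sum_nonneg; intro i' _
    apply Finset.sum_nonneg; intro m' _
    positivity
  have hVcont : ∀ κ, Continuous (fun x => V κ x) := by
    intro κ
    apply continuous_finset_sum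
    intro i' _
    apply continuous_finset_sum
    intro m' _
    have : Continuous (fun x : UnitAddCircle =>
        ∑ j ∈ Finset.Ico (m' * 2^i') ((m'+1) * 2^i'), fpair a (j+1) x) := by
      apply continuous_finset_sum
      intro j _
      exact (continuous_const.mul (fourier _).continuous).add
        (continuous_const.mul (fourier _).continuous)
    exact (this.norm).pow 2
  -- integral bound for V
  have hV_int : ∀ κ : ℕ, 1 ≤ κ → (κ:ℝ)^2 * ∫ x, V κ x ∂μ ≤ ((κ:ℝ)+1) * qS κ := by
    intro κ hκ
    have hnodecont : ∀ i' m', Continuous (fun x : UnitAddCircle =>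
        ‖∑ j ∈ Finset.Ico (m' * 2^i') ((m'+1) * 2^i'), fpair a (j+1) x‖^2) := by
      intro i' m'
      have : Continuous (fun x : UnitAddCircle =>
          ∑ j ∈ Finset.Ico (m' * 2^i') ((m'+1) * 2^i'), fpair a (j+1) x) := by
        apply continuous_finset_sum
        intro j _
        exact (continuous_const.mul (fourier _).continuous).add
          (continuous_const.mul (fourier _).continuous)
      exact (this.norm).pow 2
    have h1 : ∫ x, V κ x ∂μ = ∑ i' ∈ Finset.range (κ+1),
        ∑ m' ∈ Finset.Ico (1 * 2^(κ-i')) ((1+1) * 2^(κ-i')),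
          ∫ x, ‖∑ j ∈ Finset.Ico (m' * 2^i') ((m'+1) * 2^i'), fpair a (j+1) x‖^2 ∂μ := by
      rw [hV]
      rw [integral_finset_sum _ (fun i' _ => ?_)]
      · apply Finset.sum_congr rfl
        intro i' _
        rw [integral_finset_sum _ (fun m' _ => cont_integrable' (hnodecont i' m') μ)]
      · apply integrable_finset_sum
        intro m' _
        exact cont_integrable' (hnodecont i' m') μ
    rw [h1, Finset.mul_sum]
    have h2 : ∀ i' ∈ Finset.range (κ+1),
        (κ:ℝ)^2 * ∑ m' ∈ Finset.Ico (1 * 2^(κ-i')) ((1+1) * 2^(κ-i')),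
          ∫ x, ‖∑ j ∈ Finset.Ico (m' * 2^i') ((m'+1) * 2^i'), fpair a (j+1) x‖^2 ∂μ ≤ qS κ := by
      intro i' hi'
      have hi'le : i' ≤ κ := by
        rw [Finset.mem_range] at hi'
        omega
      have hpow : 2^(κ-i') * 2^i' = 2^κ := by
        rw [← pow_add]
        congr 1
        omega
      -- each node's shifted index set
      have hnode_eq : ∀ m' x, (∑ j ∈ Finset.Ico (m' * 2^i') ((m'+1) * 2^i'), fpair a (j+1) x)
          = ∑ j ∈ Finset.Ico (m' * 2^i' + 1) ((m'+1) * 2^i' + 1), fpair a j x := by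
        intro m' x
        exact sum_shift (fun j => fpair a j x) _ _
      have hnodesub : ∀ m' ∈ Finset.Ico (1 * 2^(κ-i')) ((1+1) * 2^(κ-i')),
          Finset.Ico (m' * 2^i' + 1) ((m'+1) * 2^i' + 1) ⊆ Fk κ := by
        intro m' hm'
        rw [Finset.mem_Ico] at hm'
        rw [hFk]
        apply Finset.Ico_subset_Ico
        · have : 2^(κ-i') * 2^i' ≤ m' * 2^i' := Nat.mul_le_mul_right _ (by omega)
          omega
        · have : (m'+1) * 2^i' ≤ ((1+1) * 2^(κ-i')) * 2^i' := Nat.mul_le_mul_right _ (by omega)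
          have h3 : ((1+1) * 2^(κ-i')) * 2^i' = 2^(κ+1) := by
            calc ((1+1) * 2^(κ-i')) * 2^i' = 2 * (2^(κ-i') * 2^i') := by ring
              _ = 2 * 2^κ := by rw [hpow]
              _ = 2^(κ+1) := by rw [pow_succ]; ring
          omega
      rw [Finset.mul_sum]
      calc ∑ m' ∈ Finset.Ico (1 * 2^(κ-i')) ((1+1) * 2^(κ-i')),
            (κ:ℝ)^2 * ∫ x, ‖∑ j ∈ Finset.Ico (m' * 2^i') ((m'+1) * 2^i'), fpair a (j+1) x‖^2 ∂μ
          ≤ ∑ m' ∈ Finset.Ico (1 * 2^(κ-i')) ((1+1) * 2^(κ-i')),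
            ∑ p ∈ GZ (Finset.Ico (m' * 2^i' + 1) ((m'+1) * 2^i' + 1)) ×ˢ
              GZ (Finset.Ico (m' * 2^i' + 1) ((m'+1) * 2^i' + 1)), tW p := by
            apply Finset.sum_le_sum
            intro m' hm'
            have heq : ∫ x, ‖∑ j ∈ Finset.Ico (m' * 2^i') ((m'+1) * 2^i'), fpair a (j+1) x‖^2 ∂μ
                = ∫ x, ‖∑ j ∈ Finset.Ico (m' * 2^i' + 1) ((m'+1) * 2^i' + 1), fpair a j x‖^2 ∂μ := by
              congr 1; ext x; rw [hnode_eq m' x]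
            rw [heq]
            exact bound_block κ hκ _ (hnodesub m' hm')
        _ ≤ qS κ := by
            rw [hqS]
            apply sum_prod_le htWnn
            · intro m1 _ m2 _ hne
              exact prod_disjoint (GZ_disjoint (node_disjoint i' hne))
            · intro m' hm'
              exact Finset.product_subset_product (GZ_subset (hnodesub m' hm'))
                (GZ_subset (hnodesub m' hm'))
    calc ∑ i' ∈ Finset.range (κ+1), (κ:ℝ)^2 *
          ∑ m' ∈ Finset.Ico (1 * 2^(κ-i')) ((1+1) * 2^(κ-i')),
            ∫ x, ‖∑ j ∈ Finset.Ico (m' * 2^i') ((m'+1) * 2^i'), fpair a (j+1) x‖^2 ∂μ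
        ≤ ∑ _i' ∈ Finset.range (κ+1), qS κ := Finset.sum_le_sum h2
      _ = ((κ:ℝ)+1) * qS κ := by
          rw [Finset.sum_const, Finset.card_range, nsmul_eq_mul]
          push_cast
          ring
  -- tree bound
  have htree : ∀ (x : UnitAddCircle) (κ N : ℕ), 2^κ ≤ N → N ≤ 2^(κ+1) →
      ‖Spart a N x - Spart a (2^κ) x‖^2 ≤ ((κ:ℝ)+1) * V κ x := by
    intro x κ N h1 h2
    rw [Spart_sub a x h1]
    have hr : N - 2^κ ≤ 2^κ := by
      have : (2:ℕ)^(κ+1) = 2^κ + 2^κ := by rw [pow_succ]; omega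
      omega
    have h3 := mr_tree (fun j => fpair a (j+1) x) κ 1 (N - 2^κ) hr
    rw [one_mul, show 2^κ + (N - 2^κ) = N from by omega] at h3
    exact h3
  -- the master function
  set Ψ : ℕ → UnitAddCircle → ℝ := fun k x =>
      ((k:ℝ)+1)^2 * ‖d (k+1) x‖^2 + ((k:ℝ)+2) * V (k+1) x with hΨ
  have hΨcont : ∀ k, Continuous (Ψ k) := by
    intro k
    apply Continuous.add
    · apply continuous_const.mul
      exact (((cont_Spart a _).sub (cont_Spart a _)).norm).pow 2
    · exact continuous_const.mul (hVcont (k+1))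
  have hΨnn : ∀ k x, 0 ≤ Ψ k x := by
    intro k x
    have h1 := hVnn (k+1) x
    have h2 : (0:ℝ) ≤ ((k:ℝ)+1)^2 * ‖d (k+1) x‖^2 := by positivity
    have h3 : (0:ℝ) ≤ ((k:ℝ)+2) * V (k+1) x := by positivity
    rw [hΨ]; dsimp only; linarith
  have hΨint : ∀ k, Integrable (Ψ k) μ := fun k => cont_integrable' (hΨcont k) μ
  have hΨint_le : ∀ k, ∫ x, Ψ k x ∂μ ≤ 5 * qS (k+1) := by
    intro k
    have hknn : (0:ℝ) ≤ (k:ℝ) := Nat.cast_nonneg k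
    have hκc : ((k+1:ℕ):ℝ) = (k:ℝ)+1 := by push_cast; ring
    have hdi : Integrable (fun x => ‖d (k+1) x‖^2) μ :=
      cont_integrable' ((((cont_Spart a _).sub (cont_Spart a _)).norm).pow 2) μ
    have hvi : Integrable (fun x => V (k+1) x) μ := cont_integrable' (hVcont (k+1)) μ
    have hsplit : ∫ x, Ψ k x ∂μ
        = ((k:ℝ)+1)^2 * ∫ x, ‖d (k+1) x‖^2 ∂μ + ((k:ℝ)+2) * ∫ x, V (k+1) x ∂μ := by
      rw [hΨ]
      dsimp only
      rw [integral_add (hdi.const_mul _) (hvi.const_mul _), integral_const_mul, integral_const_mul]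
    have hIV : 0 ≤ ∫ x, V (k+1) x ∂μ := integral_nonneg (fun x => hVnn (k+1) x)
    have hq : 0 ≤ qS (k+1) := hqSnn (k+1)
    have hb1 : ((k:ℝ)+1)^2 * ∫ x, ‖d (k+1) x‖^2 ∂μ ≤ qS (k+1) := by
      have := hd_int (k+1) (by omega)
      rwa [hκc] at this
    have hb2 : ((k:ℝ)+1)^2 * ∫ x, V (k+1) x ∂μ ≤ (((k:ℝ)+1)+1) * qS (k+1) := by
      have := hV_int (k+1) (by omega)
      rwa [hκc] at this
    have hb3 : ((k:ℝ)+2) * ∫ x, V (k+1) x ∂μ ≤ 4 * qS (k+1) := by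
      have h1 : ((k:ℝ)+1)^2 * (((k:ℝ)+2) * ∫ x, V (k+1) x ∂μ)
          ≤ ((k:ℝ)+2) * ((((k:ℝ)+1)+1) * qS (k+1)) := by
        calc ((k:ℝ)+1)^2 * (((k:ℝ)+2) * ∫ x, V (k+1) x ∂μ)
            = ((k:ℝ)+2) * (((k:ℝ)+1)^2 * ∫ x, V (k+1) x ∂μ) := by ring
          _ ≤ ((k:ℝ)+2) * ((((k:ℝ)+1)+1) * qS (k+1)) :=
              mul_le_mul_of_nonneg_left hb2 (by linarith)
      have h2 : ((k:ℝ)+2) * ((((k:ℝ)+1)+1) * qS (k+1)) ≤ ((k:ℝ)+1)^2 * (4 * qS (k+1)) := by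
        nlinarith [mul_nonneg (mul_nonneg hknn (by linarith : (0:ℝ) ≤ 3*(k:ℝ)+4)) hq]
      exact le_of_mul_le_mul_left (h1.trans h2) (by positivity)
    rw [hsplit]
    linarith
  -- lintegral of the total is finite
  have hlint : ∀ k, ∫⁻ x, ENNReal.ofReal (Ψ k x) ∂μ ≤ ENNReal.ofReal (5 * qS (k+1)) := by
    intro k
    rw [← ofReal_integral_eq_lintegral_ofReal (hΨint k) (Eventually.of_forall (hΨnn k))]
    exact ENNReal.ofReal_le_ofReal (hΨint_le k)
  have hΦmeas : Measurable (fun x => ∑' k, ENNReal.ofReal (Ψ k x)) := by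
    apply Measurable.ennreal_tsum
    intro k
    exact ((hΨcont k).measurable).ennreal_ofReal
  have hΦfin : ∫⁻ x, ∑' k, ENNReal.ofReal (Ψ k x) ∂μ ≠ ⊤ := by
    rw [lintegral_tsum (fun k => (((hΨcont k).measurable).ennreal_ofReal).aemeasurable)]
    apply ne_top_of_le_ne_top _ (ENNReal.tsum_le_tsum hlint)
    have h5 : ∀ k, ENNReal.ofReal (5 * qS (k+1)) = ENNReal.ofReal 5 * ENNReal.ofReal (qS (k+1)) :=
      fun k => ENNReal.ofReal_mul (by norm_num)
    rw [tsum_congr h5, ENNReal.tsum_mul_left]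
    exact ENNReal.mul_ne_top ENNReal.ofReal_ne_top hqsum
  have hae : ∀ᵐ x ∂μ, (∑' k, ENNReal.ofReal (Ψ k x)) < ⊤ := ae_lt_top hΦmeas hΦfin
  -- pointwise conclusion
  filter_upwards [hae] with x hx
  have hfin : ∀ (r : ℕ → ℝ), (∀ k, 0 ≤ r k) → (∀ k, r k ≤ Ψ k x) → Summable r := by
    intro r hr hle
    apply summable_of_ofReal_tsum hr
    apply ne_top_of_le_ne_top hx.ne
    exact ENNReal.tsum_le_tsum (fun k => ENNReal.ofReal_le_ofReal (hle k))
  have S1 : Summable (fun k : ℕ => ((k:ℝ)+1)^2 * ‖d (k+1) x‖^2) := by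
    apply hfin _ (fun k => by positivity)
    intro k
    have h1 : (0:ℝ) ≤ ((k:ℝ)+2) * V (k+1) x := mul_nonneg (by positivity) (hVnn (k+1) x)
    rw [hΨ]; dsimp only; linarith
  have S2 : Summable (fun k : ℕ => ((k:ℝ)+2) * V (k+1) x) := by
    apply hfin _ (fun k => mul_nonneg (by positivity) (hVnn (k+1) x))
    intro k
    have h2 : (0:ℝ) ≤ ((k:ℝ)+1)^2 * ‖d (k+1) x‖^2 := by positivity
    rw [hΨ]; dsimp only; linarith
  -- summability of increments in norm
  have hp2 : Summable (fun k : ℕ => (((k:ℝ)+1)⁻¹)^2) := by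
    have h0 : Summable (fun n : ℕ => (1:ℝ) / (n:ℝ)^2) := by
      rw [Real.summable_one_div_nat_pow]
      omega
    have h1 := (summable_nat_add_iff 1).2 h0
    apply h1.congr
    intro k
    push_cast
    rw [one_div, ← inv_pow]
  have S1' : Summable (fun k : ℕ => ‖d (k+1) x‖) := by
    apply Summable.of_nonneg_of_le (fun k => norm_nonneg _) (fun k => ?_)
      ((S1.add hp2).div_const 2)
    have hκ0 : ((k:ℝ)+1) ≠ 0 := by positivity
    have hinv : ((k:ℝ)+1) * ((k:ℝ)+1)⁻¹ = 1 := mul_inv_cancel₀ hκ0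
    have hsq := sq_nonneg (((k:ℝ)+1) * ‖d (k+1) x‖ - ((k:ℝ)+1)⁻¹)
    have hexp : (((k:ℝ)+1) * ‖d (k+1) x‖ - ((k:ℝ)+1)⁻¹)^2
        = ((k:ℝ)+1)^2 * ‖d (k+1) x‖^2 - 2*(((k:ℝ)+1) * ((k:ℝ)+1)⁻¹)*‖d (k+1) x‖
          + (((k:ℝ)+1)⁻¹)^2 := by ring
    rw [hexp, hinv] at hsq
    linarith
  have hd_sum : Summable (fun k : ℕ => d (k+1) x) := S1'.of_norm
  have htel : ∀ K : ℕ, Spart a (2^(K+1)) x = Spart a (2^(0+1)) x + ∑ k ∈ Finset.range K, d (k+1) x := by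
    intro K
    have h1 : ∑ k ∈ Finset.range K, d (k+1) x
        = Spart a (2^(K+1)) x - Spart a (2^(0+1)) x := by
      exact Finset.sum_range_sub (fun k => Spart a (2^(k+1)) x) K
    rw [h1]
    ring
  set l : ℂ := Spart a (2^(0+1)) x + ∑' k, d (k+1) x with hl
  have htend : Tendsto (fun K => Spart a (2^(K+1)) x) atTop (nhds l) := by
    have h2 := hd_sum.hasSum.tendsto_sum_nat
    have h3 := h2.const_add (Spart a (2^(0+1)) x)
    apply h3.congr
    intro K
    exact (htel K).symm
  have hV0 : Tendsto (fun k : ℕ => ((k:ℝ)+2) * V (k+1) x) atTop (nhds 0) :=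
    S2.tendsto_atTop_zero
  refine ⟨l, ?_⟩
  have hgoal : (fun N : ℕ => ∑ n ∈ Finset.Icc (-(N : ℤ)) (N : ℤ), a n * fourier n x)
      = fun N => Spart a N x := rfl
  rw [hgoal, Metric.tendsto_atTop]
  intro ε hε
  obtain ⟨K₁, hK₁⟩ := Metric.tendsto_atTop.1 htend (ε/2) (half_pos hε)
  obtain ⟨K₂, hK₂⟩ := Metric.tendsto_atTop.1 hV0 ((ε/2)^2) (by positivity)
  refine ⟨2^(max K₁ K₂ + 2), ?_⟩
  intro N hN
  have hN0 : N ≠ 0 := by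
    have : (0:ℕ) < 2^(max K₁ K₂ + 2) := by positivity
    omega
  set κ := Nat.log 2 N with hκdef
  have hκ1 : 2^κ ≤ N := Nat.pow_log_le_self 2 hN0
  have hκ2 : N < 2^(κ+1) := Nat.lt_pow_succ_log_self (by norm_num) N
  have hκK : max K₁ K₂ + 2 ≤ κ := (Nat.le_log_iff_pow_le (by norm_num) hN0).2 hN
  have hκpos : 1 ≤ κ := by omega
  have htb := htree x κ N hκ1 (le_of_lt hκ2)
  have hdist1 : dist (Spart a (2^κ) x) l < ε/2 := by
    have := hK₁ (κ-1) (by omega)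
    rwa [show (κ-1)+1 = κ from by omega] at this
  have hVb : ((κ:ℝ)+1) * V κ x < (ε/2)^2 := by
    have h1 := hK₂ (κ-1) (by omega)
    rw [show (κ-1)+1 = κ from by omega] at h1
    have hc : (((κ-1:ℕ)):ℝ) + 2 = (κ:ℝ)+1 := by
      rw [Nat.cast_sub hκpos]
      push_cast
      ring
    rw [hc] at h1
    have h2 : ((κ:ℝ)+1) * V κ x ≤ |((κ:ℝ)+1) * V κ x| := le_abs_self _
    rw [Real.dist_eq, sub_zero] at h1
    linarith
  have hnorm : ‖Spart a N x - Spart a (2^κ) x‖ < ε/2 := by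
    have h2 : ‖Spart a N x - Spart a (2^κ) x‖^2 < (ε/2)^2 := lt_of_le_of_lt htb hVb
    nlinarith [norm_nonneg (Spart a N x - Spart a (2^κ) x), half_pos hε]
  calc dist (Spart a N x) l
      ≤ dist (Spart a N x) (Spart a (2^κ) x) + dist (Spart a (2^κ) x) l := dist_triangle _ _ _
    _ < ε/2 + ε/2 := by
        apply add_lt_add _ hdist1
        rw [dist_eq_norm]
        exact hnorm
    _ = ε := by ring
end
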